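/- arXiv:1404.1549 — 3 statements merged into one kernel-verified Lean document; each statement's English description precedes it below -/
import Mathlib

section
/- Let G and H be graphs without isolated vertices. Then the Kronecker double coverings K_2 × G and K_2 × H are isomorphic as graphs if and only if the box complexes B(G) and B(H) are isomorphic as posets. -/
/-- A graph: a vertex type with a symmetric edge relation (loops allowed). -/
structure SymmGraph where
  V : Type
  E : V → V → Prop
  symm : ∀ ⦃x y⦄, E x y → E y x

/-- Graph homomorphisms. -/
def SymmGraph.Hom (G H : SymmGraph) : Type :=
  {f : G.V → H.V // ∀ ⦃x y⦄, G.E x y → H.E (f x) (f y)}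

/-- Graph isomorphisms: bijective homomorphisms whose inverse is a homomorphism. -/
structure SymmGraph.Iso (G H : SymmGraph) extends G.V ≃ H.V where
  edge_iff : ∀ x y, G.E x y ↔ H.E (toEquiv x) (toEquiv y)

/-- The complete graph `K₂` on two vertices. -/
def K2 : SymmGraph := ⟨Fin 2, fun x y => x ≠ y, fun _ _ h => h.symm⟩

/-- The tensor (categorical) product of graphs. -/
def SymmGraph.tensor (G H : SymmGraph) : SymmGraph :=
  ⟨G.V × H.V, fun p q => G.E p.1 q.1 ∧ H.E p.2 q.2,
   fun _ _ h => ⟨G.symm h.1, H.symm h.2⟩⟩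

/-- No isolated vertices. -/
def SymmGraph.NoIsolated (G : SymmGraph) : Prop := ∀ x, ∃ y, G.E x y

/-- The box complex `B(G)`: pairs of nonempty subsets `(σ, τ)` with `σ × τ ⊆ E(G)`. -/
def SymmGraph.Box (G : SymmGraph) : Type :=
  {p : Set G.V × Set G.V //
    p.1.Nonempty ∧ p.2.Nonempty ∧ ∀ x ∈ p.1, ∀ y ∈ p.2, G.E x y}

instance (G : SymmGraph) : PartialOrder G.Box where
  le a b := a.1.1 ⊆ b.1.1 ∧ a.1.2 ⊆ b.1.2
  le_refl a := ⟨subset_rfl, subset_rfl⟩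
  le_trans a b c h1 h2 := ⟨h1.1.trans h2.1, h1.2.trans h2.2⟩
  le_antisymm a b h1 h2 :=
    Subtype.ext (Prod.ext (h1.1.antisymm h2.1) (h1.2.antisymm h2.2))

/-- The canonical involution `(σ,τ) ↦ (τ,σ)` of the box complex. -/
def SymmGraph.Box.flip {G : SymmGraph} (p : G.Box) : G.Box :=
  ⟨(p.1.2, p.1.1), p.2.2.1, p.2.1, fun x hx y hy => G.symm (p.2.2.2 y hy x hx)⟩

/-! ### Order-theoretic predicates -/

section OrderPart
variable {α β : Type*} [PartialOrder α] [PartialOrder β]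

/-- "Unilateral": any two distinct minimal elements below `p` have a common cover. -/
def UU (p : α) : Prop :=
  ∀ a b, a ≤ p → b ≤ p → IsMin a → IsMin b → a ≠ b → ∃ c, a ⋖ c ∧ b ⋖ c

/-- Maximal among unilateral elements. -/
def Mx (p : α) : Prop := ∀ q, UU q → p ≤ q → q = p

/-- The unilateral elements above `p` have a greatest element. -/
def HUM (p : α) : Prop := ∃ m, UU m ∧ p ≤ m ∧ ∀ q, UU q → p ≤ q → q ≤ m

/-- Order-theoretic characterization of "vertex elements". -/
def RR (p : α) : Prop := UU p ∧ (IsMin p ∨ Mx p) ∧ HUM p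

/-- Elements corresponding to two vertices. -/
def Dbl (p : α) : Prop := IsMin p ∧ IsMax p

lemma UU_map (e : α ≃o β) {p : α} (h : UU p) : UU (e p) := by
  intro a b ha hb hma hmb hne
  obtain ⟨c, hc1, hc2⟩ := h (e.symm a) (e.symm b)
    (by simpa using e.symm.monotone ha) (by simpa using e.symm.monotone hb)
    (e.symm.isMin_apply.2 hma) (e.symm.isMin_apply.2 hmb)
    (e.symm.injective.ne hne)
  exact ⟨e c, by simpa using (apply_covBy_apply_iff e).2 hc1,
    by simpa using (apply_covBy_apply_iff e).2 hc2⟩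

lemma Mx_map (e : α ≃o β) {p : α} (h : Mx p) : Mx (e p) := by
  intro q hq hle
  have h2 : p ≤ e.symm q := by simpa using e.symm.monotone hle
  have := h (e.symm q) (by simpa using UU_map e.symm hq) h2
  have := congrArg e this
  simpa using this

lemma HUM_map (e : α ≃o β) {p : α} (h : HUM p) : HUM (e p) := by
  obtain ⟨m, hm, hpm, hmax⟩ := h
  refine ⟨e m, UU_map e hm, e.monotone hpm, fun q hq hle => ?_⟩
  have h2 : p ≤ e.symm q := by simpa using e.symm.monotone hle
  have := hmax (e.symm q) (by simpa using UU_map e.symm hq) h2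
  have := e.monotone this
  simpa using this

lemma RR_map (e : α ≃o β) {p : α} (h : RR p) : RR (e p) := by
  obtain ⟨h1, h2, h3⟩ := h
  refine ⟨UU_map e h1, ?_, HUM_map e h3⟩
  rcases h2 with h2 | h2
  · exact Or.inl (e.isMin_apply.2 h2)
  · exact Or.inr (Mx_map e h2)

lemma Dbl_map (e : α ≃o β) {p : α} (h : Dbl p) : Dbl (e p) :=
  ⟨e.isMin_apply.2 h.1, e.isMax_apply.2 h.2⟩

end OrderPart

/-! ### Box complex basics -/

namespace SymmGraph
variable {G : SymmGraph}

lemma Box.le_def {p q : G.Box} : p ≤ q ↔ p.1.1 ⊆ q.1.1 ∧ p.1.2 ⊆ q.1.2 := Iff.rfl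

def nbhd (G : SymmGraph) (x : G.V) : Set G.V := {y | G.E x y}

lemma mem_nbhd {G : SymmGraph} {x y : G.V} : y ∈ G.nbhd x ↔ G.E x y := Iff.rfl

/-- The atom `({x},{y})` of the box complex. -/
def atomB (G : SymmGraph) {x y : G.V} (h : G.E x y) : G.Box :=
  ⟨({x}, {y}), ⟨x, rfl⟩, ⟨y, rfl⟩, by
    rintro a ha b hb
    rw [Set.mem_singleton_iff] at ha hb; subst ha; subst hb; exact h⟩

lemma isMin_atomB {x y : G.V} (h : G.E x y) : IsMin (G.atomB h) := by
  intro q hq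
  have h1 : q.1.1 = {x} := (q.2.1.subset_singleton_iff).1 hq.1
  have h2 : q.1.2 = {y} := (q.2.2.1.subset_singleton_iff).1 hq.2
  exact ⟨h1.symm.subset.trans subset_rfl, h2.symm.subset.trans subset_rfl⟩

lemma isMin_parts {p : G.Box} (h : IsMin p) :
    (∃ x, p.1.1 = {x}) ∧ ∃ y, p.1.2 = {y} := by
  obtain ⟨x, hx⟩ := p.2.1
  obtain ⟨y, hy⟩ := p.2.2.1
  have hxy : G.E x y := p.2.2.2 x hx y hy
  have h2 : p ≤ G.atomB hxy :=
    h ⟨Set.singleton_subset_iff.2 hx, Set.singleton_subset_iff.2 hy⟩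
  exact ⟨⟨x, h2.1.antisymm (Set.singleton_subset_iff.2 hx)⟩,
    ⟨y, h2.2.antisymm (Set.singleton_subset_iff.2 hy)⟩⟩

/-- The element `({x},{y₁,y₂})`. -/
def pairBox (G : SymmGraph) {x y₁ y₂ : G.V} (h1 : G.E x y₁) (h2 : G.E x y₂) : G.Box :=
  ⟨({x}, {y₁, y₂}), ⟨x, rfl⟩, ⟨y₁, Or.inl rfl⟩, by
    rintro a ha b hb
    rw [Set.mem_singleton_iff] at ha; subst ha
    rcases hb with hb | hb
    · rw [hb]; exact h1
    · rw [Set.mem_singleton_iff] at hb; rw [hb]; exact h2⟩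

lemma pairBox_comm {x y₁ y₂ : G.V} (h1 : G.E x y₁) (h2 : G.E x y₂) :
    G.pairBox h2 h1 = G.pairBox h1 h2 :=
  Subtype.ext (Prod.ext rfl (Set.pair_comm _ _))

lemma covBy_pairBox {x y₁ y₂ : G.V} (h1 : G.E x y₁) (h2 : G.E x y₂)
    (hne : y₁ ≠ y₂) {a : G.Box} (ha1 : a.1.1 = {x}) (ha2 : a.1.2 = {y₁}) :
    a ⋖ G.pairBox h1 h2 := by
  have hpb1 : (G.pairBox h1 h2).1.1 = {x} := rfl
  have hpb2 : (G.pairBox h1 h2).1.2 = {y₁, y₂} := rfl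
  have hle : a ≤ G.pairBox h1 h2 := by
    constructor
    · rw [ha1, hpb1]
    · rw [ha2, hpb2]; exact Set.singleton_subset_iff.2 (Or.inl rfl)
  have hlt : a < G.pairBox h1 h2 := by
    refine lt_of_le_of_ne hle (fun hcon => ?_)
    have h' : a.1.2 = ({y₁, y₂} : Set G.V) := by rw [hcon, hpb2]
    rw [ha2] at h'
    have : y₂ ∈ ({y₁} : Set G.V) := h'.symm ▸ (Set.mem_insert_iff.2 (Or.inr rfl))
    exact hne (Set.mem_singleton_iff.1 this).symm
  refine ⟨hlt, fun z hz1 hz2 => ?_⟩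
  have hz11 : z.1.1 = {x} := by
    refine (z.2.1.subset_singleton_iff).1 ?_
    have := hz2.le.1; rwa [hpb1] at this
  have hz12sub : z.1.2 ⊆ {y₁, y₂} := by
    have := hz2.le.2; rwa [hpb2] at this
  have hz12sup : ({y₁} : Set G.V) ⊆ z.1.2 := ha2 ▸ hz1.le.2
  by_cases hy2 : y₂ ∈ z.1.2
  · apply hz2.ne
    refine Subtype.ext (Prod.ext (hz11.trans hpb1.symm) ((Set.Subset.antisymm hz12sub ?_).trans hpb2.symm))
    intro t ht
    rcases Set.mem_insert_iff.1 ht with h | h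
    · subst h; exact hz12sup rfl
    · rw [Set.mem_singleton_iff] at h; subst h; exact hy2
  · apply hz1.ne'
    refine Subtype.ext (Prod.ext (hz11.trans ha1.symm) ?_)
    refine ((Set.subset_singleton_iff.2 ?_).antisymm hz12sup).trans ha2.symm
    intro t ht
    rcases Set.mem_insert_iff.1 (hz12sub ht) with h | h
    · exact h
    · rw [Set.mem_singleton_iff] at h; subst h; exact absurd ht hy2

/-- Flip as an order isomorphism. -/
def flipIso (G : SymmGraph) : G.Box ≃o G.Box where
  toFun := Box.flip
  invFun := Box.flip
  left_inv p := Subtype.ext (Prod.mk.eta)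
  right_inv p := Subtype.ext (Prod.mk.eta)
  map_rel_iff' := and_comm

lemma flipIso_apply (p : G.Box) : flipIso G p = p.flip := rfl

lemma UU_of_left {p : G.Box} (h : p.1.1.Subsingleton) : UU p := by
  intro a b ha hb hma hmb hne
  obtain ⟨⟨x₁, hx₁⟩, ⟨y₁, hy₁⟩⟩ := isMin_parts hma
  obtain ⟨⟨x₂, hx₂⟩, ⟨y₂, hy₂⟩⟩ := isMin_parts hmb
  have hx1m : x₁ ∈ p.1.1 := ha.1 (hx₁ ▸ rfl)
  have hx2m : x₂ ∈ p.1.1 := hb.1 (hx₂ ▸ rfl)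
  have hxx : x₂ = x₁ := h hx2m hx1m
  subst hxx
  have hyy : y₁ ≠ y₂ := by
    intro hcon; subst hcon
    exact hne (Subtype.ext (Prod.ext (hx₁.trans hx₂.symm) (hy₁.trans hy₂.symm)))
  have e1 : G.E x₂ y₁ := a.2.2.2 x₂ (hx₁ ▸ rfl) y₁ (hy₁ ▸ rfl)
  have e2 : G.E x₂ y₂ := b.2.2.2 x₂ (hx₂ ▸ rfl) y₂ (hy₂ ▸ rfl)
  refine ⟨G.pairBox e1 e2, covBy_pairBox e1 e2 hyy hx₁ hy₁, ?_⟩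
  rw [← pairBox_comm]
  exact covBy_pairBox e2 e1 hyy.symm hx₂ hy₂

lemma UU_of_right {p : G.Box} (h : p.1.2.Subsingleton) : UU p := by
  have h1 : UU p.flip := UU_of_left (p := p.flip) h
  have := UU_map (flipIso G) h1
  rw [flipIso_apply] at this
  have he : p.flip.flip = p := Subtype.ext (Prod.mk.eta)
  rwa [he] at this

lemma UU_to_ss {p : G.Box} (h : UU p) :
    p.1.1.Subsingleton ∨ p.1.2.Subsingleton := by
  by_contra hcon
  push_neg at hcon
  obtain ⟨hns1, hns2⟩ := hcon
  obtain ⟨x₁, hx₁, x₂, hx₂, hxx⟩ := hns1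
  obtain ⟨y₁, hy₁, y₂, hy₂, hyy⟩ := hns2
  have e1 : G.E x₁ y₁ := p.2.2.2 x₁ hx₁ y₁ hy₁
  have e2 : G.E x₂ y₂ := p.2.2.2 x₂ hx₂ y₂ hy₂
  have hne : G.atomB e1 ≠ G.atomB e2 := by
    intro hcon
    have h' : ({x₁} : Set G.V) = {x₂} := congrArg (fun q : G.Box => q.1.1) hcon
    exact hxx (Set.singleton_eq_singleton_iff.1 h')
  obtain ⟨c, hc1, hc2⟩ := h (G.atomB e1) (G.atomB e2)
    ⟨Set.singleton_subset_iff.2 hx₁, Set.singleton_subset_iff.2 hy₁⟩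
    ⟨Set.singleton_subset_iff.2 hx₂, Set.singleton_subset_iff.2 hy₂⟩
    (isMin_atomB e1) (isMin_atomB e2) hne
  have hx1c : x₁ ∈ c.1.1 := hc1.le.1 rfl
  have hx2c : x₂ ∈ c.1.1 := hc2.le.1 rfl
  have hy1c : y₁ ∈ c.1.2 := hc1.le.2 rfl
  have hy2c : y₂ ∈ c.1.2 := hc2.le.2 rfl
  obtain ⟨z, hz11, hz12⟩ : ∃ z : G.Box, z.1.1 = {x₁} ∧ z.1.2 = c.1.2 :=
    ⟨⟨({x₁}, c.1.2), ⟨x₁, rfl⟩, c.2.2.1, by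
      rintro s hs t ht
      rw [Set.mem_singleton_iff] at hs; rw [hs]
      exact c.2.2.2 x₁ hx1c t ht⟩, rfl, rfl⟩
  have hz1 : G.atomB e1 < z := by
    refine lt_of_le_of_ne ⟨by rw [hz11]; exact subset_rfl, by rw [hz12]; exact Set.singleton_subset_iff.2 hy1c⟩ ?_
    intro hcon
    have h' : z.1.2 = {y₁} := congrArg (fun q : G.Box => q.1.2) hcon.symm
    have : y₂ ∈ ({y₁} : Set G.V) := h' ▸ (hz12 ▸ hy2c)
    exact hyy (Set.mem_singleton_iff.1 this).symm
  have hz2 : z < c := by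
    refine lt_of_le_of_ne ⟨by rw [hz11]; exact Set.singleton_subset_iff.2 hx1c, by rw [hz12]⟩ ?_
    intro hcon
    have h' : c.1.1 = {x₁} := by rw [← hcon, hz11]
    have : x₂ ∈ ({x₁} : Set G.V) := h' ▸ hx2c
    exact hxx (Set.mem_singleton_iff.1 this).symm
  exact hc1.2 hz1 hz2

end SymmGraph

/-! ### Vertex elements -/

namespace SymmGraph

lemma fin2cases (i : Fin 2) : i = 0 ∨ i = 1 := by omega

variable {G : SymmGraph}

/-- The vertex element `({x}, N(x))`. -/
def EV0 (G : SymmGraph) (hG : G.NoIsolated) (x : G.V) : G.Box :=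
  ⟨({x}, G.nbhd x), ⟨x, rfl⟩, hG x, by
    rintro a ha b hb
    rw [Set.mem_singleton_iff] at ha; rw [ha]; exact hb⟩

/-- The vertex element `(N(x), {x})`. -/
def EV1 (G : SymmGraph) (hG : G.NoIsolated) (x : G.V) : G.Box :=
  (EV0 G hG x).flip

def EV (G : SymmGraph) (hG : G.NoIsolated) (v : Fin 2 × G.V) : G.Box :=
  if v.1 = 0 then EV0 G hG v.2 else EV1 G hG v.2

variable (hG : G.NoIsolated)

lemma EV_zero (x : G.V) : EV G hG (0, x) = EV0 G hG x := if_pos rfl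

lemma EV_one (x : G.V) : EV G hG (1, x) = EV1 G hG x :=
  if_neg (fun h => (by decide : ¬(1 : Fin 2) = 0) h)

lemma EV0_fst (x : G.V) : (EV0 G hG x).1.1 = {x} := rfl
lemma EV0_snd (x : G.V) : (EV0 G hG x).1.2 = G.nbhd x := rfl
lemma EV1_fst (x : G.V) : (EV1 G hG x).1.1 = G.nbhd x := rfl
lemma EV1_snd (x : G.V) : (EV1 G hG x).1.2 = {x} := rfl

lemma isMin_of_parts {p : G.Box} {s t : G.V} (hx : p.1.1 = {s}) (hy : p.1.2 = {t}) :
    IsMin p := by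
  have e : G.E s t := p.2.2.2 s (hx ▸ rfl) t (hy ▸ rfl)
  have hp : p = G.atomB e := Subtype.ext (Prod.ext hx hy)
  rw [hp]; exact isMin_atomB e

lemma le_EV0_iff {p : G.Box} {x : G.V} (hx : x ∈ p.1.1) :
    p.1.2 ⊆ G.nbhd x := fun t ht => p.2.2.2 x hx t ht

lemma le_EV1_iff {p : G.Box} {y : G.V} (hy : y ∈ p.1.2) :
    p.1.1 ⊆ G.nbhd y := fun s hs => G.symm (p.2.2.2 s hs y hy)

lemma RR_EV0 (x : G.V) : RR (EV0 G hG x) := by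
  refine ⟨UU_of_left (by rw [EV0_fst]; exact Set.subsingleton_singleton), ?_, ?_⟩
  · -- IsMin ∨ Mx
    by_cases hss : (G.nbhd x).Subsingleton
    · obtain ⟨y, hy⟩ : ∃ y, G.nbhd x = {y} := by
        rcases hss.eq_empty_or_singleton with h | h
        · exact absurd (show (G.nbhd x).Nonempty from hG x)
            (by rw [h]; exact Set.not_nonempty_empty)
        · exact h
      exact Or.inl (isMin_of_parts (EV0_fst hG x) (by rw [EV0_snd, hy]))
    · refine Or.inr (fun q hqU hle => ?_)
      rcases UU_to_ss hqU with hq | hq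
      · have hxq : x ∈ q.1.1 := hle.1 rfl
        have h1 : q.1.1 = {x} := hq.eq_singleton_of_mem hxq
        have h2 : q.1.2 = G.nbhd x := (le_EV0_iff hxq).antisymm hle.2
        exact Subtype.ext (Prod.ext h1 h2)
      · exact absurd (hq.anti hle.2) hss
  · -- HUM
    by_cases hss : (G.nbhd x).Subsingleton
    · obtain ⟨y, hy⟩ : ∃ y, G.nbhd x = {y} := by
        rcases hss.eq_empty_or_singleton with h | h
        · exact absurd (show (G.nbhd x).Nonempty from hG x)
            (by rw [h]; exact Set.not_nonempty_empty)
        · exact h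
      have hxy : G.E x y := show y ∈ G.nbhd x from hy ▸ rfl
      refine ⟨EV1 G hG y, UU_of_right (by rw [EV1_snd]; exact Set.subsingleton_singleton),
        ⟨Set.singleton_subset_iff.2 (G.symm hxy), by rw [EV0_snd, EV1_snd, hy]⟩,
        fun q hqU hle => ?_⟩
      rcases UU_to_ss hqU with hq | hq
      · have hxq : x ∈ q.1.1 := hle.1 rfl
        have h1 : q.1.1 = {x} := hq.eq_singleton_of_mem hxq
        refine ⟨by rw [h1, EV1_fst]; exact Set.singleton_subset_iff.2 (G.symm hxy), ?_⟩
        rw [EV1_snd, ← hy]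
        exact le_EV0_iff hxq
      · have hyq : y ∈ q.1.2 := hle.2 (by rw [EV0_snd, hy]; rfl)
        have h2 : q.1.2 = {y} := hq.eq_singleton_of_mem hyq
        exact ⟨by rw [EV1_fst]; exact le_EV1_iff hyq, by rw [h2, EV1_snd]⟩
    · refine ⟨EV0 G hG x, UU_of_left (by rw [EV0_fst]; exact Set.subsingleton_singleton),
        le_rfl, fun q hqU hle => ?_⟩
      rcases UU_to_ss hqU with hq | hq
      · have hxq : x ∈ q.1.1 := hle.1 rfl
        exact ⟨by rw [hq.eq_singleton_of_mem hxq, EV0_fst], by rw [EV0_snd]; exact le_EV0_iff hxq⟩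
      · exact absurd (hq.anti hle.2) hss

lemma flip_flip (p : G.Box) : p.flip.flip = p := Subtype.ext (Prod.mk.eta)

lemma RR_EV1 (x : G.V) : RR (EV1 G hG x) := by
  have := RR_map (flipIso G) (RR_EV0 hG x)
  rwa [flipIso_apply] at this

lemma RR_EV (v : Fin 2 × G.V) : RR (EV G hG v) := by
  by_cases h : v.1 = 0
  · rw [EV, if_pos h]; exact RR_EV0 hG v.2
  · rw [EV, if_neg h]; exact RR_EV1 hG v.2

lemma EV_flip (v : Fin 2 × G.V) : (EV G hG v).flip = EV G hG (1 - v.1, v.2) := by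
  obtain ⟨i, x⟩ := v
  rcases fin2cases i with rfl | rfl
  · rw [show ((1 : Fin 2) - 0) = 1 from rfl, EV_zero, EV_one]; rfl
  · rw [show ((1 : Fin 2) - 1) = 0 from rfl, EV_zero, EV_one]
    exact flip_flip _

/-- Every element satisfying `RR` is a vertex element: left-subsingleton case. -/
lemma range_left {p : G.Box} (hss : p.1.1.Subsingleton) (hRR : RR p) :
    ∃ v, EV G hG v = p := by
  obtain ⟨x, hx1⟩ : ∃ x, p.1.1 = {x} := by
    rcases hss.eq_empty_or_singleton with h | h
    · exact absurd p.2.1 (by rw [h]; exact Set.not_nonempty_empty)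
    · exact h
  have hxm : x ∈ p.1.1 := hx1 ▸ rfl
  have hsub : p.1.2 ⊆ G.nbhd x := le_EV0_iff hxm
  by_cases heq : p.1.2 = G.nbhd x
  · exact ⟨(0, x), (EV_zero hG x).trans (Subtype.ext (Prod.ext hx1.symm heq.symm))⟩
  · obtain ⟨y', hy'n, hy'p⟩ := Set.not_subset.1 (fun h => heq (hsub.antisymm h))
    by_cases hss2 : p.1.2.Subsingleton
    · obtain ⟨y, hy2⟩ : ∃ y, p.1.2 = {y} := by
        rcases hss2.eq_empty_or_singleton with h | h
        · exact absurd p.2.2.1 (by rw [h]; exact Set.not_nonempty_empty)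
        · exact h
      have hym : y ∈ p.1.2 := hy2 ▸ rfl
      have hxy : G.E x y := p.2.2.2 x hxm y hym
      by_cases hNy : G.nbhd y ⊆ {x}
      · refine ⟨(1, y), (EV_one hG y).trans (Subtype.ext (Prod.ext ?_ hy2.symm))⟩
        rw [EV1_fst, hNy.antisymm (Set.singleton_subset_iff.2 (G.symm hxy)), hx1]
      · obtain ⟨x', hx'm, hx'⟩ := Set.not_subset.1 hNy
        exfalso
        obtain ⟨m, hmU, hpm, hmax⟩ := hRR.2.2
        have hq1 : p ≤ EV0 G hG x := ⟨by rw [hx1, EV0_fst], by rw [EV0_snd]; exact hsub⟩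
        have hq2 : p ≤ EV1 G hG y :=
          ⟨by rw [EV1_fst, hx1]; exact Set.singleton_subset_iff.2 (G.symm hxy),
           by rw [EV1_snd, hy2]⟩
        have hm1 := hmax (EV0 G hG x)
          (UU_of_left (by rw [EV0_fst]; exact Set.subsingleton_singleton)) hq1
        have hm2 := hmax (EV1 G hG y)
          (UU_of_right (by rw [EV1_snd]; exact Set.subsingleton_singleton)) hq2
        have hxm1 : x ∈ m.1.1 := hm2.1 (by rw [EV1_fst]; exact G.symm hxy)
        have hx'm1 : x' ∈ m.1.1 := hm2.1 (by rw [EV1_fst]; exact hx'm)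
        have hym1 : y ∈ m.1.2 := hm1.2 (by rw [EV0_snd]; exact hxy)
        have hy'm1 : y' ∈ m.1.2 := hm1.2 (by rw [EV0_snd]; exact hy'n)
        rcases UU_to_ss hmU with hm | hm
        · exact hx' (hm.eq_singleton_of_mem hxm1 ▸ hx'm1)
        · have hyy' : y = y' := hm hym1 hy'm1
          exact hy'p (hyy' ▸ hym)
    · exfalso
      rcases hRR.2.1 with hmin | hmx
      · exact hss2 (by
          obtain ⟨_, ⟨y, hy⟩⟩ := isMin_parts hmin
          rw [hy]; exact Set.subsingleton_singleton)
      · have hq1 : p ≤ EV0 G hG x := ⟨by rw [hx1, EV0_fst], by rw [EV0_snd]; exact hsub⟩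
        have := hmx (EV0 G hG x)
          (UU_of_left (by rw [EV0_fst]; exact Set.subsingleton_singleton)) hq1
        exact heq (by rw [← this, EV0_snd])

lemma range_EV {p : G.Box} (hRR : RR p) : ∃ v, EV G hG v = p := by
  rcases UU_to_ss hRR.1 with hss | hss
  · exact range_left hG hss hRR
  · have h1 : RR p.flip := by
      have := RR_map (flipIso G) hRR
      rwa [flipIso_apply] at this
    obtain ⟨v, hv⟩ := range_left hG (p := p.flip) hss h1
    refine ⟨(1 - v.1, v.2), ?_⟩
    rw [← EV_flip, hv, flip_flip]

end SymmGraph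

/-! ### Doubled vertex elements, adjacency, reconstruction -/

namespace SymmGraph
variable {G : SymmGraph} (hG : G.NoIsolated)

lemma EV_inj_same {v w : Fin 2 × G.V} (h : EV G hG v = EV G hG w)
    (h1 : v.1 = w.1) : v = w := by
  obtain ⟨i, x⟩ := v; obtain ⟨j, y⟩ := w
  cases h1
  rcases fin2cases i with rfl | rfl
  · rw [EV_zero, EV_zero] at h
    have : ({x} : Set G.V) = {y} := congrArg (fun q : G.Box => q.1.1) h
    rw [Set.singleton_eq_singleton_iff.1 this]
  · rw [EV_one, EV_one] at h
    have : ({x} : Set G.V) = {y} := congrArg (fun q : G.Box => q.1.2) h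
    rw [Set.singleton_eq_singleton_iff.1 this]

lemma dbl_core {x y : G.V} (h : EV0 G hG x = EV1 G hG y) : Dbl (EV0 G hG x) := by
  have hA : ({x} : Set G.V) = G.nbhd y := congrArg (fun q : G.Box => q.1.1) h
  have hB : G.nbhd x = ({y} : Set G.V) := congrArg (fun q : G.Box => q.1.2) h
  constructor
  · exact isMin_of_parts (EV0_fst hG x) (by rw [EV0_snd, hB])
  · intro q hq
    have hxq : x ∈ q.1.1 := hq.1 rfl
    have hyq : y ∈ q.1.2 := hq.2 (show y ∈ G.nbhd x from hB ▸ rfl)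
    constructor
    · intro s hs
      have hsy : s ∈ G.nbhd y := le_EV1_iff hyq hs
      rw [← hA] at hsy
      exact hsy
    · exact le_EV0_iff hxq

lemma dbl_of_ne {v w : Fin 2 × G.V} (hE : EV G hG v = EV G hG w) (hne : v ≠ w) :
    Dbl (EV G hG v) := by
  have h1 : v.1 ≠ w.1 := fun h => hne (EV_inj_same hG hE h)
  obtain ⟨i, x⟩ := v; obtain ⟨j, y⟩ := w
  rcases fin2cases i with rfl | rfl <;> rcases fin2cases j with rfl | rfl
  · exact absurd rfl h1
  · rw [EV_zero] at hE ⊢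
    exact dbl_core hG (hE.trans (EV_one hG y))
  · rw [EV_one] at hE ⊢
    have := dbl_core hG ((EV_zero hG y).symm.trans hE.symm)
    rwa [(EV_zero hG y).symm.trans hE.symm] at this
  · exact absurd rfl h1

lemma dbl_both {p : G.Box} (hRR : RR p) (hmin : IsMin p) (hmax : IsMax p) :
    (∃ x, EV G hG (0, x) = p) ∧ (∃ y, EV G hG (1, y) = p) := by
  obtain ⟨v, hv⟩ := range_EV hG hRR
  obtain ⟨i, x⟩ := v
  rcases fin2cases i with rfl | rfl
  · refine ⟨⟨x, hv⟩, ?_⟩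
    have hp0 : EV0 G hG x = p := (EV_zero hG x).symm.trans hv
    obtain ⟨y, hy⟩ := (isMin_parts hmin).2
    have hNx : G.nbhd x = {y} := by rw [← EV0_snd hG x, hp0]; exact hy
    have hxy : G.E x y := show y ∈ G.nbhd x from hNx ▸ rfl
    have hle : p ≤ EV1 G hG y := by
      refine ⟨?_, by rw [EV1_snd, hy]⟩
      rw [← hp0, EV0_fst, EV1_fst]
      exact Set.singleton_subset_iff.2 (G.symm hxy)
    exact ⟨y, (EV_one hG y).trans (le_antisymm (hmax hle) hle)⟩
  · refine ⟨?_, ⟨x, hv⟩⟩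
    have hp1 : EV1 G hG x = p := (EV_one hG x).symm.trans hv
    obtain ⟨y, hy⟩ := (isMin_parts hmin).1
    have hNx : G.nbhd x = {y} := by rw [← EV1_fst hG x, hp1]; exact hy
    have hxy : G.E x y := show y ∈ G.nbhd x from hNx ▸ rfl
    have hle : p ≤ EV0 G hG y := by
      refine ⟨by rw [← hp1, EV1_fst, hNx, EV0_fst], ?_⟩
      rw [← hp1, EV1_snd, EV0_snd]
      exact Set.singleton_subset_iff.2 (G.symm hxy)
    exact ⟨y, (EV_zero hG y).trans (le_antisymm (hmax hle) hle)⟩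

lemma adj_iff (v w : Fin 2 × G.V) :
    (K2.tensor G).E v w ↔ v ≠ w ∧ ∃ a : G.Box, a ≤ EV G hG v ∧ a ≤ EV G hG w := by
  obtain ⟨i, x⟩ := v; obtain ⟨j, y⟩ := w
  constructor
  · intro h
    have hij : i ≠ j := h.1
    have he : G.E x y := h.2
    refine ⟨fun hc => hij (congrArg Prod.fst hc), ?_⟩
    rcases fin2cases i with rfl | rfl <;> rcases fin2cases j with rfl | rfl
    · exact absurd rfl hij
    · refine ⟨G.atomB he, ?_, ?_⟩
      · rw [EV_zero]
        exact ⟨subset_rfl, Set.singleton_subset_iff.2 he⟩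
      · rw [EV_one]
        exact ⟨Set.singleton_subset_iff.2 (G.symm he), subset_rfl⟩
    · refine ⟨G.atomB (G.symm he), ?_, ?_⟩
      · rw [EV_one]
        exact ⟨Set.singleton_subset_iff.2 he, subset_rfl⟩
      · rw [EV_zero]
        exact ⟨subset_rfl, Set.singleton_subset_iff.2 (G.symm he)⟩
    · exact absurd rfl hij
  · rintro ⟨hne, a, hav, haw⟩
    obtain ⟨s, hs⟩ := a.2.1
    obtain ⟨t, ht⟩ := a.2.2.1
    rcases fin2cases i with rfl | rfl <;> rcases fin2cases j with rfl | rfl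
    · rw [EV_zero] at hav haw
      exfalso
      have hsx : s = x := hav.1 hs
      have hsy : s = y := haw.1 hs
      exact hne (by rw [hsx.symm.trans hsy])
    · rw [EV_zero] at hav
      rw [EV_one] at haw
      have hsx : s = x := hav.1 hs
      have hty : t = y := haw.2 ht
      have he : G.E x y := by rw [← hsx, ← hty]; exact a.2.2.2 s hs t ht
      exact ⟨(by decide : (0 : Fin 2) ≠ 1), he⟩
    · rw [EV_one] at hav
      rw [EV_zero] at haw
      have htx : t = x := hav.2 ht
      have hsy : s = y := haw.1 hs
      have he : G.E y x := by rw [← hsy, ← htx]; exact a.2.2.2 s hs t ht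
      exact ⟨(by decide : (1 : Fin 2) ≠ 0), G.symm he⟩
    · rw [EV_one] at hav haw
      exfalso
      have htx : t = x := hav.2 ht
      have hty : t = y := haw.2 ht
      exact hne (by rw [htx.symm.trans hty])

end SymmGraph

/-- The reconstruction graph of a poset. -/
def Rec (α : Type) [PartialOrder α] : SymmGraph where
  V := {pb : α × Bool // RR pb.1 ∧ (pb.2 = false → Dbl pb.1)}
  E p q := p ≠ q ∧ ∃ a, a ≤ p.1.1 ∧ a ≤ q.1.1
  symm p q h := ⟨h.1.symm, h.2.imp fun a ha => ⟨ha.2, ha.1⟩⟩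

namespace SymmGraph
variable {G : SymmGraph} (hG : G.NoIsolated)

open Classical in
noncomputable def bitOf (v : Fin 2 × G.V) : Bool :=
  if v.1 = 0 then true else if Dbl (EV G hG v) then false else true

noncomputable def toRec (v : Fin 2 × G.V) : (Rec G.Box).V :=
  ⟨(EV G hG v, bitOf hG v), RR_EV hG v, by
    intro hf
    unfold bitOf at hf
    split_ifs at hf with h1 h2
    · exact h2⟩

lemma toRec_fst (v : Fin 2 × G.V) : (toRec hG v).1.1 = EV G hG v := rfl
lemma toRec_snd (v : Fin 2 × G.V) : (toRec hG v).1.2 = bitOf hG v := rfl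

lemma toRec_inj : Function.Injective (toRec hG) := by
  intro v w h
  have h' : (EV G hG v, bitOf hG v) = (EV G hG w, bitOf hG w) := congrArg Subtype.val h
  have hE : EV G hG v = EV G hG w := congrArg Prod.fst h'
  have hb : bitOf hG v = bitOf hG w := congrArg Prod.snd h'
  by_contra hne
  have hdbl := dbl_of_ne hG hE hne
  have h1 : v.1 ≠ w.1 := fun hh => hne (EV_inj_same hG hE hh)
  rcases fin2cases v.1 with hv1 | hv1 <;> rcases fin2cases w.1 with hw1 | hw1
  · exact h1 (hv1.trans hw1.symm)
  · have hbv : bitOf hG v = true := by rw [bitOf, if_pos hv1]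
    have hbw : bitOf hG w = false := by
      rw [bitOf, if_neg (by rw [hw1]; decide), if_pos (hE ▸ hdbl)]
    rw [hbv, hbw] at hb
    exact Bool.noConfusion hb
  · have hbv : bitOf hG v = false := by
      rw [bitOf, if_neg (by rw [hv1]; decide), if_pos hdbl]
    have hbw : bitOf hG w = true := by rw [bitOf, if_pos hw1]
    rw [hbv, hbw] at hb
    exact Bool.noConfusion hb
  · exact h1 (hv1.trans hw1.symm)

lemma toRec_surj : Function.Surjective (toRec hG) := by
  rintro ⟨⟨p, b⟩, hR, hDb⟩
  cases b
  · -- b = false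
    have hD : Dbl p := hDb rfl
    obtain ⟨-, y, hy⟩ := dbl_both hG hR hD.1 hD.2
    refine ⟨(1, y), Subtype.ext (Prod.ext hy ?_)⟩
    rw [toRec_snd, bitOf, if_neg (fun h => (by decide : ¬(1 : Fin 2) = 0) h), if_pos (hy ▸ hD)]
  · -- b = true
    obtain ⟨v, hv⟩ := range_EV hG hR
    rcases fin2cases v.1 with hv1 | hv1
    · exact ⟨v, Subtype.ext (Prod.ext hv (by rw [toRec_snd, bitOf, if_pos hv1]))⟩
    · by_cases hD : Dbl p
      · obtain ⟨⟨x, hx⟩, -⟩ := dbl_both hG hR hD.1 hD.2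
        exact ⟨(0, x), Subtype.ext (Prod.ext hx (by rw [toRec_snd, bitOf, if_pos rfl]))⟩
      · refine ⟨v, Subtype.ext (Prod.ext hv ?_)⟩
        rw [toRec_snd, bitOf, if_neg (by rw [hv1]; decide), if_neg (hv ▸ hD)]

noncomputable def isoRec : (K2.tensor G).Iso (Rec G.Box) where
  toEquiv := Equiv.ofBijective (toRec hG) ⟨toRec_inj hG, toRec_surj hG⟩
  edge_iff v w := by
    rw [adj_iff hG v w]
    show _ ↔ (Rec G.Box).E (toRec hG v) (toRec hG w)
    constructor
    · rintro ⟨hne, a, h1, h2⟩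
      exact ⟨fun hc => hne (toRec_inj hG hc), a, h1, h2⟩
    · rintro ⟨hne, a, h1, h2⟩
      exact ⟨fun hc => hne (congrArg (toRec hG) hc), a, h1, h2⟩

end SymmGraph

def recEquiv {α β : Type} [PartialOrder α] [PartialOrder β] (e : α ≃o β) :
    (Rec α).V ≃ (Rec β).V where
  toFun p := ⟨(e p.1.1, p.1.2), RR_map e p.2.1, fun h => Dbl_map e (p.2.2 h)⟩
  invFun q := ⟨(e.symm q.1.1, q.1.2), RR_map e.symm q.2.1, fun h => Dbl_map e.symm (q.2.2 h)⟩
  left_inv p := Subtype.ext (Prod.ext (e.symm_apply_apply _) rfl)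
  right_inv q := Subtype.ext (Prod.ext (e.apply_symm_apply _) rfl)

def recIso {α β : Type} [PartialOrder α] [PartialOrder β] (e : α ≃o β) :
    (Rec α).Iso (Rec β) where
  toEquiv := recEquiv e
  edge_iff p q := by
    constructor
    · rintro ⟨hne, a, h1, h2⟩
      exact ⟨fun hc => hne ((recEquiv e).injective hc), e a, e.monotone h1, e.monotone h2⟩
    · rintro ⟨hne, a, h1, h2⟩
      rw [show ((recEquiv e) p).1.1 = e p.1.1 from rfl] at h1
      rw [show ((recEquiv e) q).1.1 = e q.1.1 from rfl] at h2
      refine ⟨fun hc => hne (congrArg _ hc), e.symm a,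
        by simpa using e.symm.monotone h1, by simpa using e.symm.monotone h2⟩

def SymmGraph.Iso.symm' {G H : SymmGraph} (f : G.Iso H) : H.Iso G where
  toEquiv := f.toEquiv.symm
  edge_iff x y := by
    rw [f.edge_iff (f.toEquiv.symm x) (f.toEquiv.symm y), f.toEquiv.apply_symm_apply,
      f.toEquiv.apply_symm_apply]

def SymmGraph.Iso.trans' {G H K : SymmGraph} (f : G.Iso H) (g : H.Iso K) : G.Iso K where
  toEquiv := f.toEquiv.trans g.toEquiv
  edge_iff x y := (f.edge_iff x y).trans (g.edge_iff _ _)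

/-! ### Forward direction: a graph isomorphism of double covers induces a poset
isomorphism of box complexes -/

namespace SymmGraph

variable {G H : SymmGraph}

def sideA (f : Fin 2 × G.V → Fin 2 × H.V) (p : G.Box) : Set (Fin 2 × H.V) :=
  (fun x => f (0, x)) '' p.1.1

def sideB (f : Fin 2 × G.V → Fin 2 × H.V) (p : G.Box) : Set (Fin 2 × H.V) :=
  (fun y => f (1, y)) '' p.1.2

lemma sideA_def (f : Fin 2 × G.V → Fin 2 × H.V) (p : G.Box) :
    sideA f p = (fun x => f (0, x)) '' p.1.1 := rfl

lemma sideB_def (f : Fin 2 × G.V → Fin 2 × H.V) (p : G.Box) :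
    sideB f p = (fun y => f (1, y)) '' p.1.2 := rfl

section Fwd

variable (f : (Fin 2 × G.V) ≃ (Fin 2 × H.V))
  (hf : ∀ v w, (K2.tensor G).E v w ↔ (K2.tensor H).E (f v) (f w))

include hf

lemma hedge (p : G.Box) :
    ∀ a ∈ sideA (⇑f) p, ∀ b ∈ sideB (⇑f) p, (K2.tensor H).E a b := by
  rintro a ⟨x, hx, rfl⟩ b ⟨y, hy, rfl⟩
  exact (hf ((0 : Fin 2), x) ((1 : Fin 2), y)).1 ⟨(by decide : (0 : Fin 2) ≠ 1), p.2.2.2 x hx y hy⟩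

lemma sides (p : G.Box) :
    ((∀ a ∈ sideA (⇑f) p, a.1 = 0) ∧ ∀ b ∈ sideB (⇑f) p, b.1 = 1) ∨
    ((∀ a ∈ sideA (⇑f) p, a.1 = 1) ∧ ∀ b ∈ sideB (⇑f) p, b.1 = 0) := by
  obtain ⟨a₀, ha₀⟩ : (sideA (⇑f) p).Nonempty := p.2.1.image _
  obtain ⟨b₀, hb₀⟩ : (sideB (⇑f) p).Nonempty := p.2.2.1.image _
  have hne : ∀ a ∈ sideA (⇑f) p, ∀ b ∈ sideB (⇑f) p, a.1 ≠ b.1 :=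
    fun a ha b hb => (hedge f hf p a ha b hb).1
  rcases fin2cases a₀.1 with h | h
  · left
    have hB : ∀ b ∈ sideB (⇑f) p, b.1 = 1 := by
      intro b hb
      rcases fin2cases b.1 with hb1 | hb1
      · exact absurd (h.trans hb1.symm) (hne a₀ ha₀ b hb)
      · exact hb1
    refine ⟨fun a ha => ?_, hB⟩
    rcases fin2cases a.1 with ha1 | ha1
    · exact ha1
    · exact absurd (ha1.trans (hB b₀ hb₀).symm) (hne a ha b₀ hb₀)
  · right
    have hB : ∀ b ∈ sideB (⇑f) p, b.1 = 0 := by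
      intro b hb
      rcases fin2cases b.1 with hb1 | hb1
      · exact hb1
      · exact absurd (h.trans hb1.symm) (hne a₀ ha₀ b hb)
    refine ⟨fun a ha => ?_, hB⟩
    rcases fin2cases a.1 with ha1 | ha1
    · exact absurd (ha1.trans (hB b₀ hb₀).symm) (hne a ha b₀ hb₀)
    · exact ha1

open Classical in
noncomputable def fwdFun (p : G.Box) : H.Box :=
  if ∀ a ∈ sideA (⇑f) p, a.1 = 0 then
    ⟨(Prod.snd '' sideA (⇑f) p, Prod.snd '' sideB (⇑f) p),
      (p.2.1.image _).image _, (p.2.2.1.image _).image _, by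
        rintro x' ⟨a, ha, rfl⟩ y' ⟨b, hb, rfl⟩
        exact (hedge f hf p a ha b hb).2⟩
  else
    ⟨(Prod.snd '' sideB (⇑f) p, Prod.snd '' sideA (⇑f) p),
      (p.2.2.1.image _).image _, (p.2.1.image _).image _, by
        rintro x' ⟨b, hb, rfl⟩ y' ⟨a, ha, rfl⟩
        exact H.symm (hedge f hf p a ha b hb).2⟩

lemma sideB_one {p : G.Box} (h : ∀ a ∈ sideA (⇑f) p, a.1 = 0) :
    ∀ b ∈ sideB (⇑f) p, b.1 = 1 := by
  rcases sides f hf p with hs | hs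
  · exact hs.2
  · obtain ⟨a₀, ha₀⟩ : (sideA (⇑f) p).Nonempty := p.2.1.image _
    exact absurd ((h a₀ ha₀).symm.trans (hs.1 a₀ ha₀)) (by decide)

lemma sideA_one {p : G.Box} (h : ¬∀ a ∈ sideA (⇑f) p, a.1 = 0) :
    (∀ a ∈ sideA (⇑f) p, a.1 = 1) ∧ ∀ b ∈ sideB (⇑f) p, b.1 = 0 := by
  rcases sides f hf p with hs | hs
  · exact absurd hs.1 h
  · exact hs

open Classical in
lemma fwd_fst_pos {p : G.Box} (h : ∀ a ∈ sideA (⇑f) p, a.1 = 0) :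
    (fwdFun f hf p).1.1 = Prod.snd '' sideA (⇑f) p := by
  unfold fwdFun; exact congrArg (fun q : H.Box => q.1.1) (if_pos h)

open Classical in
lemma fwd_snd_pos {p : G.Box} (h : ∀ a ∈ sideA (⇑f) p, a.1 = 0) :
    (fwdFun f hf p).1.2 = Prod.snd '' sideB (⇑f) p := by
  unfold fwdFun; exact congrArg (fun q : H.Box => q.1.2) (if_pos h)

open Classical in
lemma fwd_fst_neg {p : G.Box} (h : ¬∀ a ∈ sideA (⇑f) p, a.1 = 0) :
    (fwdFun f hf p).1.1 = Prod.snd '' sideB (⇑f) p := by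
  simp only [fwdFun, h, ↓reduceIte]

open Classical in
lemma fwd_snd_neg {p : G.Box} (h : ¬∀ a ∈ sideA (⇑f) p, a.1 = 0) :
    (fwdFun f hf p).1.2 = Prod.snd '' sideA (⇑f) p := by
  simp only [fwdFun, h, ↓reduceIte]

lemma cond_mono {p q : G.Box} (hpq : p ≤ q) (h : ∀ a ∈ sideA (⇑f) p, a.1 = 0) :
    ∀ a ∈ sideA (⇑f) q, a.1 = 0 := by
  obtain ⟨a₀, ha₀⟩ : (sideA (⇑f) p).Nonempty := p.2.1.image _
  have hsub : sideA (⇑f) p ⊆ sideA (⇑f) q := Set.image_mono hpq.1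
  rcases sides f hf q with hs | hs
  · exact hs.1
  · exact absurd ((h a₀ ha₀).symm.trans (hs.1 a₀ (hsub ha₀))) (by decide)

lemma fwd_mono {p q : G.Box} (hpq : p ≤ q) : fwdFun f hf p ≤ fwdFun f hf q := by
  by_cases h : ∀ a ∈ sideA (⇑f) p, a.1 = 0
  · have hq := cond_mono f hf hpq h
    refine ⟨?_, ?_⟩
    · rw [fwd_fst_pos f hf h, fwd_fst_pos f hf hq]
      exact Set.image_mono (Set.image_mono hpq.1)
    · rw [fwd_snd_pos f hf h, fwd_snd_pos f hf hq]
      exact Set.image_mono (Set.image_mono hpq.2)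
  · have hq : ¬∀ a ∈ sideA (⇑f) q, a.1 = 0 := by
      intro hc
      obtain ⟨a₀, ha₀⟩ : (sideA (⇑f) p).Nonempty := p.2.1.image _
      have hsub : sideA (⇑f) p ⊆ sideA (⇑f) q := Set.image_mono hpq.1
      have h1 := (sideA_one f hf h).1 a₀ ha₀
      exact absurd ((hc a₀ (hsub ha₀)).symm.trans h1) (by decide)
    refine ⟨?_, ?_⟩
    · rw [fwd_fst_neg f hf h, fwd_fst_neg f hf hq]
      exact Set.image_mono (Set.image_mono hpq.2)
    · rw [fwd_snd_neg f hf h, fwd_snd_neg f hf hq]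
      exact Set.image_mono (Set.image_mono hpq.1)

lemma hfsymm : ∀ v w, (K2.tensor H).E v w ↔ (K2.tensor G).E (f.symm v) (f.symm w) := by
  intro v w
  constructor
  · intro h
    exact (hf _ _).2 ((congrArg₂ (K2.tensor H).E (f.apply_symm_apply v) (f.apply_symm_apply w)).mpr h)
  · intro h
    have := (hf _ _).1 h
    exact (congrArg₂ (K2.tensor H).E (f.apply_symm_apply v) (f.apply_symm_apply w)).mp this

lemma roundtrip (p : G.Box) : fwdFun f.symm (hfsymm f hf) (fwdFun f hf p) = p := by
  by_cases h : ∀ a ∈ sideA (⇑f) p, a.1 = 0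
  · have hb1 := sideB_one f hf h
    have hCA : sideA (⇑f.symm) (fwdFun f hf p) = (fun x => ((0 : Fin 2), x)) '' p.1.1 := by
      rw [sideA_def, fwd_fst_pos f hf h, Set.image_image]
      calc (fun a => f.symm (0, a.2)) '' sideA (⇑f) p
          = (fun a => f.symm a) '' sideA (⇑f) p :=
            Set.image_congr (fun a ha => by
              rw [show ((0 : Fin 2), a.2) = a from Prod.ext (h a ha).symm rfl])
        _ = (fun x => f.symm (f (0, x))) '' p.1.1 := by rw [sideA_def, Set.image_image]
        _ = (fun x => ((0 : Fin 2), x)) '' p.1.1 :=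
            Set.image_congr (fun x _ => f.symm_apply_apply _)
    have hCB : sideB (⇑f.symm) (fwdFun f hf p) = (fun y => ((1 : Fin 2), y)) '' p.1.2 := by
      rw [sideB_def, fwd_snd_pos f hf h, Set.image_image]
      calc (fun b => f.symm (1, b.2)) '' sideB (⇑f) p
          = (fun b => f.symm b) '' sideB (⇑f) p :=
            Set.image_congr (fun b hb => by
              rw [show ((1 : Fin 2), b.2) = b from Prod.ext (hb1 b hb).symm rfl])
        _ = (fun y => f.symm (f (1, y))) '' p.1.2 := by rw [sideB_def, Set.image_image]
        _ = (fun y => ((1 : Fin 2), y)) '' p.1.2 :=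
            Set.image_congr (fun y _ => f.symm_apply_apply _)
    have hcond' : ∀ a ∈ sideA (⇑f.symm) (fwdFun f hf p), a.1 = 0 := by
      rw [hCA]; rintro a ⟨x, _, rfl⟩; rfl
    apply Subtype.ext
    apply Prod.ext
    · rw [fwd_fst_pos f.symm (hfsymm f hf) hcond', hCA, Set.image_image]
      exact Set.image_id' _
    · rw [fwd_snd_pos f.symm (hfsymm f hf) hcond', hCB, Set.image_image]
      exact Set.image_id' _
  · obtain ⟨ha1, hb0⟩ := sideA_one f hf h
    have hCA : sideA (⇑f.symm) (fwdFun f hf p) = (fun y => ((1 : Fin 2), y)) '' p.1.2 := by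
      rw [sideA_def, fwd_fst_neg f hf h, Set.image_image]
      calc (fun b => f.symm (0, b.2)) '' sideB (⇑f) p
          = (fun b => f.symm b) '' sideB (⇑f) p :=
            Set.image_congr (fun b hb => by
              rw [show ((0 : Fin 2), b.2) = b from Prod.ext (hb0 b hb).symm rfl])
        _ = (fun y => f.symm (f (1, y))) '' p.1.2 := by rw [sideB_def, Set.image_image]
        _ = (fun y => ((1 : Fin 2), y)) '' p.1.2 :=
            Set.image_congr (fun y _ => f.symm_apply_apply _)
    have hCB : sideB (⇑f.symm) (fwdFun f hf p) = (fun x => ((0 : Fin 2), x)) '' p.1.1 := by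
      rw [sideB_def, fwd_snd_neg f hf h, Set.image_image]
      calc (fun a => f.symm (1, a.2)) '' sideA (⇑f) p
          = (fun a => f.symm a) '' sideA (⇑f) p :=
            Set.image_congr (fun a ha => by
              rw [show ((1 : Fin 2), a.2) = a from Prod.ext (ha1 a ha).symm rfl])
        _ = (fun x => f.symm (f (0, x))) '' p.1.1 := by rw [sideA_def, Set.image_image]
        _ = (fun x => ((0 : Fin 2), x)) '' p.1.1 :=
            Set.image_congr (fun x _ => f.symm_apply_apply _)
    have hcond' : ¬∀ a ∈ sideA (⇑f.symm) (fwdFun f hf p), a.1 = 0 := by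
      intro hc
      obtain ⟨y, hy⟩ := p.2.2.1
      have hmem : ((1 : Fin 2), y) ∈ sideA (⇑f.symm) (fwdFun f hf p) := by
        rw [hCA]; exact ⟨y, hy, rfl⟩
      have h1 := hc _ hmem
      exact (by decide : ¬(1 : Fin 2) = 0) h1
    apply Subtype.ext
    apply Prod.ext
    · rw [fwd_fst_neg f.symm (hfsymm f hf) hcond', hCB, Set.image_image]
      exact Set.image_id' _
    · rw [fwd_snd_neg f.symm (hfsymm f hf) hcond', hCA, Set.image_image]
      exact Set.image_id' _

end Fwd

lemma fwdFun_congr (f g : (Fin 2 × G.V) ≃ (Fin 2 × H.V)) (h : f = g)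
    (hf : ∀ v w, (K2.tensor G).E v w ↔ (K2.tensor H).E (f v) (f w))
    (hg : ∀ v w, (K2.tensor G).E v w ↔ (K2.tensor H).E (g v) (g w)) :
    fwdFun f hf = fwdFun g hg := by subst h; rfl

noncomputable def forwardOrderIso (f : (Fin 2 × G.V) ≃ (Fin 2 × H.V))
    (hf : ∀ v w, (K2.tensor G).E v w ↔ (K2.tensor H).E (f v) (f w)) :
    G.Box ≃o H.Box where
  toEquiv :=
    { toFun := fwdFun f hf
      invFun := fwdFun f.symm (hfsymm f hf)
      left_inv := roundtrip f hf
      right_inv := fun q => by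
        have h := roundtrip f.symm (hfsymm f hf) q
        rwa [fwdFun_congr f.symm.symm f f.symm_symm (hfsymm f.symm (hfsymm f hf)) hf] at h }
  map_rel_iff' := by
    intro p q
    show fwdFun f hf p ≤ fwdFun f hf q ↔ p ≤ q
    constructor
    · intro h
      have h2 := fwd_mono f.symm (hfsymm f hf) h
      rwa [roundtrip f hf p, roundtrip f hf q] at h2
    · exact fwd_mono f hf

end SymmGraph

/-- for graphs without isolated vertices, the Kronecker double coverings
`K₂ × G` and `K₂ × H` are isomorphic as graphs iff the box complexes `B(G)` and
`B(H)` are isomorphic as posets. -/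
theorem box_poset_iso_iff_kronecker_iso (G H : SymmGraph)
    (hG : G.NoIsolated) (hH : H.NoIsolated) :
    Nonempty ((K2.tensor G).Iso (K2.tensor H)) ↔ Nonempty (G.Box ≃o H.Box) := by
  constructor
  · rintro ⟨ψ⟩
    exact ⟨SymmGraph.forwardOrderIso ψ.toEquiv ψ.edge_iff⟩
  · rintro ⟨φ⟩
    exact ⟨((SymmGraph.isoRec hG).trans' (recIso φ)).trans' (SymmGraph.isoRec hH).symm'⟩
end

section
/- Let m and n be integers greater than 2. Then there exist finite connected graphs G and H with χ(G) = m and χ(H) = n such that the box complexes B(G) and B(H) are isomorphic as posets and the neighborhood complexes N(G) and N(H) are isomorphic as abstract simplicial complexes. -/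
/-- The complete graph `Kₙ`. -/
def completeGraphOn (n : ℕ) : SymmGraph := ⟨Fin n, fun x y => x ≠ y, fun _ _ h => h.symm⟩

/-- A graph is connected if any two vertices are joined by a walk. -/
def SymmGraph.Connected (G : SymmGraph) : Prop := ∀ x y : G.V, Relation.ReflTransGen G.E x y

/-- `χ(G) = n`: `n` is the least number such that there is a homomorphism `G → Kₙ`. -/
def SymmGraph.chromEq (G : SymmGraph) (n : ℕ) : Prop :=
  IsLeast {k : ℕ | Nonempty (G.Hom (completeGraphOn k))} n

/-- An abstract simplicial complex, given by its vertex type and its simplices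
(nonempty finite vertex sets). -/
structure SComplex where
  V : Type
  S : Finset V → Prop

/-- Isomorphism of abstract simplicial complexes: a bijection of vertex sets under
which a finite set is a simplex iff its image is a simplex. -/
def SComplex.Iso (A B : SComplex) : Prop :=
  ∃ e : A.V ≃ B.V, ∀ s : Finset A.V, A.S s ↔ B.S (s.map e.toEmbedding)

/-- The neighborhood complex `N(G)`: vertices are the non-isolated vertices of `G`,
simplices the nonempty finite sets contained in the neighborhood of some vertex. -/
def SymmGraph.NC (G : SymmGraph) : SComplex where
  V := {x : G.V // ∃ y, G.E x y}
  S s := s.Nonempty ∧ ∃ v : G.V, ∀ x ∈ s, G.E v x.val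
namespace BoxProof

/-- Vertex set: two copies of `Fin k` (indexed by `Fin 2`) plus `s` apex vertices. -/
abbrev Vks (k s : ℕ) := (Fin k × Fin 2) ⊕ Fin s

/-- Generic edge relation: on the `Fin k × Fin 2` part, edges are `r i j ∧ x ≠ y`;
apexes form a complete graph and are joined to everything. -/
def Egen (k s : ℕ) (r : Fin 2 → Fin 2 → Prop) : Vks k s → Vks k s → Prop
  | .inl a, .inl b => r a.2 b.2 ∧ a.1 ≠ b.1
  | .inr u, .inr v => u ≠ v
  | .inl _, .inr _ => True
  | .inr _, .inl _ => True

lemma Egen_symm (k s : ℕ) (r : Fin 2 → Fin 2 → Prop)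
    (hr : ∀ i j, r i j → r j i) :
    ∀ ⦃x y : Vks k s⦄, Egen k s r x y → Egen k s r y x := by
  rintro (a|u) (b|v) h
  · exact ⟨hr _ _ h.1, h.2.symm⟩
  · trivial
  · trivial
  · exact h.symm

def GG (k s : ℕ) : SymmGraph := ⟨Vks k s, Egen k s Eq, Egen_symm k s Eq (fun _ _ h => h.symm)⟩
def HH (k s : ℕ) : SymmGraph := ⟨Vks k s, Egen k s Ne, Egen_symm k s Ne (fun _ _ h => h.symm)⟩

/-- The flip of the second coordinate. -/
def fl (k s : ℕ) : Vks k s ≃ Vks k s :=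
  Equiv.sumCongr (Equiv.prodCongr (Equiv.refl _) (Equiv.swap 0 1)) (Equiv.refl _)

@[simp] lemma fl_inl (k s : ℕ) (a : Fin k × Fin 2) :
    fl k s (.inl a) = .inl (a.1, Equiv.swap 0 1 a.2) := rfl
@[simp] lemma fl_inr (k s : ℕ) (u : Fin s) : fl k s (.inr u) = .inr u := rfl

lemma fl_fl (k s : ℕ) (x : Vks k s) : fl k s (fl k s x) = x := by
  rcases x with a | u
  · simp
  · simp

lemma key (k s : ℕ) : ∀ x y : Vks k s, Egen k s Eq x y ↔ Egen k s Ne x (fl k s y) := by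
  have h2 : ∀ i j : Fin 2, (i = j) ↔ i ≠ Equiv.swap 0 1 j := by decide
  rintro (a|u) (b|v)
  · show (a.2 = b.2 ∧ a.1 ≠ b.1) ↔ (a.2 ≠ Equiv.swap 0 1 b.2 ∧ a.1 ≠ b.1)
    rw [← h2]
  · exact Iff.rfl
  · exact Iff.rfl
  · exact Iff.rfl

lemma key' (k s : ℕ) : ∀ x y : Vks k s, Egen k s Ne x y ↔ Egen k s Eq x (fl k s y) := by
  intro x y
  rw [key k s x (fl k s y), fl_fl]

end BoxProof
namespace BoxProof

def boxFun (k s : ℕ) (p : (GG k s).Box) : (HH k s).Box :=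
  ⟨(p.1.1, fl k s '' p.1.2), p.2.1, p.2.2.1.image _, by
    rintro x hx y ⟨y0, hy0, rfl⟩
    exact (key k s x y0).mp (p.2.2.2 x hx y0 hy0)⟩

def boxInv (k s : ℕ) (p : (HH k s).Box) : (GG k s).Box :=
  ⟨(p.1.1, fl k s '' p.1.2), p.2.1, p.2.2.1.image _, by
    rintro x hx y ⟨y0, hy0, rfl⟩
    exact (key' k s x y0).mp (p.2.2.2 x hx y0 hy0)⟩

lemma image_fl_fl (k s : ℕ) (t : Set (Vks k s)) : fl k s '' (fl k s '' t) = t := by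
  rw [Set.image_image]
  simp [fl_fl]

def boxIso (k s : ℕ) : (GG k s).Box ≃o (HH k s).Box where
  toFun := boxFun k s
  invFun := boxInv k s
  left_inv p := by
    apply Subtype.ext
    apply Prod.ext
    · rfl
    · exact image_fl_fl k s _
  right_inv p := by
    apply Subtype.ext
    apply Prod.ext
    · rfl
    · exact image_fl_fl k s _
  map_rel_iff' {p q} := by
    show (p.1.1 ⊆ q.1.1 ∧ fl k s '' p.1.2 ⊆ fl k s '' q.1.2) ↔ _
    exact and_congr Iff.rfl (Set.image_subset_image_iff (fl k s).injective)

lemma iso_iff (k s : ℕ) (x : Vks k s) :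
    (∃ y, Egen k s Eq x y) ↔ (∃ y, Egen k s Ne (fl k s x) y) := by
  constructor
  · rintro ⟨y, h⟩
    refine ⟨y, Egen_symm k s Ne (fun _ _ h => h.symm) ?_⟩
    exact (key k s y x).mp (Egen_symm k s Eq (fun _ _ h => h.symm) h)
  · rintro ⟨y, h⟩
    refine ⟨y, Egen_symm k s Eq (fun _ _ h => h.symm) ?_⟩
    exact (key k s y x).mpr (Egen_symm k s Ne (fun _ _ h => h.symm) h)

noncomputable def ncE (k s : ℕ) : (GG k s).NC.V ≃ (HH k s).NC.V :=
  Equiv.subtypeEquiv (fl k s) (iso_iff k s)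

lemma ncIso (k s : ℕ) : (GG k s).NC.Iso (HH k s).NC := by
  refine ⟨ncE k s, fun t => ?_⟩
  show (t.Nonempty ∧ _) ↔ ((t.map _).Nonempty ∧ _)
  refine Iff.trans ?_ (and_congr_left' Finset.map_nonempty.symm)
  refine and_congr Iff.rfl ⟨?_, ?_⟩
  · rintro ⟨v, hv⟩
    refine ⟨v, ?_⟩
    intro z hz
    replace hz := Finset.mem_map.mp hz
    obtain ⟨x, hx, rfl⟩ := hz
    show (HH k s).E v ((ncE k s) x).val
    have : ((ncE k s) x).val = fl k s x.val := rfl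
    rw [this]
    exact (key k s v x.val).mp (hv x hx)
  · rintro ⟨v, hv⟩
    refine ⟨v, ?_⟩
    intro x hx
    have hmem : (ncE k s) x ∈ t.map (ncE k s).toEmbedding := by
      rw [Finset.mem_map]
      exact ⟨x, hx, rfl⟩
    have h := hv _ hmem
    have hval : ((ncE k s) x).val = fl k s x.val := rfl
    rw [hval] at h
    exact (key k s v x.val).mpr h

end BoxProof
namespace BoxProof

lemma clique_lower {G : SymmGraph} {c j : ℕ} (g : Fin c → G.V)
    (hg : ∀ i i' : Fin c, i ≠ i' → G.E (g i) (g i'))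
    (hj : Nonempty (G.Hom (completeGraphOn j))) : c ≤ j := by
  obtain ⟨f, hf⟩ := hj
  have e : (completeGraphOn j).V ≃ Fin j := Equiv.refl (Fin j)
  have hinj : Function.Injective (fun i : Fin c => e (f (g i))) := by
    intro i i' h
    by_contra hne
    exact hf (hg i i' hne) (e.injective h)
  simpa using Fintype.card_le_of_injective _ hinj

lemma GG_chrom (k s : ℕ) (hk : 1 ≤ k) : (GG k s).chromEq (k + s) := by
  constructor
  · refine ⟨⟨fun x => ?_, ?_⟩⟩
    · exact match x with
        | .inl a => ⟨a.1.val, by omega⟩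
        | .inr u => ⟨k + u.val, by omega⟩
    · rintro (a|u) (b|v) h <;> intro heq <;>
        have hv := congrArg Fin.val heq <;> simp at hv
      · exact h.2 (Fin.ext hv)
      · omega
      · omega
      · exact h (Fin.ext (by omega))
  · rintro j ⟨f⟩
    refine clique_lower (G := GG k s)
      (fun i => if h : i.val < k then .inl (⟨i.val, h⟩, 0) else .inr ⟨i.val - k, by omega⟩)
      ?_ ⟨f⟩
    intro i i' hne
    have hv : i.val ≠ i'.val := fun h => hne (Fin.ext h)
    by_cases h1 : i.val < k <;> by_cases h2 : i'.val < k <;>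
      simp only [dif_pos, dif_neg, h1, h2, dite_true, dite_false, GG]
    · exact ⟨rfl, fun h => hv (Fin.mk_eq_mk.mp h)⟩
    · trivial
    · trivial
    · intro h
      have := congrArg Fin.val h
      simp at this
      omega

lemma HH_chrom (k s : ℕ) (hk : 2 ≤ k) : (HH k s).chromEq (s + 2) := by
  constructor
  · refine ⟨⟨fun x => ?_, ?_⟩⟩
    · exact match x with
        | .inl a => ⟨a.2.val, by omega⟩
        | .inr u => ⟨2 + u.val, by omega⟩
    · rintro (a|u) (b|v) h <;> intro heq <;>
        have hv := congrArg Fin.val heq <;> simp at hv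
      · exact h.1 (Fin.ext hv)
      · omega
      · omega
      · exact h (Fin.ext (by omega))
  · rintro j ⟨f⟩
    refine clique_lower (G := HH k s)
      (fun i => if h : i.val < 2 then .inl (⟨i.val, by omega⟩, ⟨i.val, h⟩)
        else .inr ⟨i.val - 2, by omega⟩)
      ?_ ⟨f⟩
    intro i i' hne
    have hv : i.val ≠ i'.val := fun h => hne (Fin.ext h)
    by_cases h1 : i.val < 2 <;> by_cases h2 : i'.val < 2 <;>
      simp only [dif_pos, dif_neg, h1, h2, dite_true, dite_false, HH]
    · exact ⟨fun h => hv (Fin.mk_eq_mk.mp h), fun h => hv (Fin.mk_eq_mk.mp h)⟩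
    · trivial
    · trivial
    · intro h
      have := congrArg Fin.val h
      simp at this
      omega

lemma Egen_conn (k s : ℕ) (r : Fin 2 → Fin 2 → Prop)
    (hr : ∀ i j, r i j → r j i) (hs : 1 ≤ s) :
    ∀ x y : Vks k s, Relation.ReflTransGen (Egen k s r) x y := by
  have step : ∀ x : Vks k s, Relation.ReflTransGen (Egen k s r) x (.inr ⟨0, hs⟩) := by
    rintro (a|u)
    · exact Relation.ReflTransGen.single trivial
    · by_cases h : u = ⟨0, hs⟩
      · rw [h]
      · exact Relation.ReflTransGen.single h
  intro x y
  have hsym : Symmetric (Egen k s r) := fun a b h => Egen_symm k s r hr h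
  exact (step x).trans ((@Relation.ReflTransGen.stdSymm _ _ ⟨fun a b h => hsym h⟩).symm _ _ (step y))

lemma construction (k s : ℕ) (hk : 2 ≤ k) (hs : 1 ≤ s) :
    ∃ G H : SymmGraph, Finite G.V ∧ Finite H.V ∧ G.Connected ∧ H.Connected ∧
      G.chromEq (k + s) ∧ H.chromEq (s + 2) ∧
      Nonempty (G.Box ≃o H.Box) ∧ G.NC.Iso H.NC := by
  refine ⟨GG k s, HH k s, ?_, ?_, ?_, ?_, GG_chrom k s (by omega), HH_chrom k s hk,
    ⟨boxIso k s⟩, ncIso k s⟩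
  · show Finite (Vks k s); infer_instance
  · show Finite (Vks k s); infer_instance
  · exact Egen_conn k s Eq (fun _ _ h => h.symm) hs
  · exact Egen_conn k s Ne (fun _ _ h => h.symm) hs

lemma iso_symm {A B : SComplex} (h : SComplex.Iso A B) : SComplex.Iso B A := by
  obtain ⟨e, he⟩ := h
  refine ⟨e.symm, fun t => ?_⟩
  have h2 : (t.map e.symm.toEmbedding).map e.toEmbedding = t := by
    rw [Finset.map_map]
    ext z
    simp
  conv_lhs => rw [← h2]
  exact (he _).symm

end BoxProof
/-- for any integers `m, n > 2`, there are finite connected graphs `G`, `H`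
with `χ(G) = m`, `χ(H) = n`, whose box complexes are isomorphic as posets and whose
neighborhood complexes are isomorphic. -/
theorem exists_graphs_different_chromatic_same_box_poset
    (m n : ℕ) (hm : 2 < m) (hn : 2 < n) :
    ∃ G H : SymmGraph, Finite G.V ∧ Finite H.V ∧ G.Connected ∧ H.Connected ∧
      G.chromEq m ∧ H.chromEq n ∧
      Nonempty (G.Box ≃o H.Box) ∧ G.NC.Iso H.NC := by
  rcases le_total n m with h | h
  · obtain ⟨G, H, f1, f2, c1, c2, ch1, ch2, b, nc⟩ :=
      BoxProof.construction (m - n + 2) (n - 2) (by omega) (by omega)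
    rw [show m - n + 2 + (n - 2) = m by omega] at ch1
    rw [show n - 2 + 2 = n by omega] at ch2
    exact ⟨G, H, f1, f2, c1, c2, ch1, ch2, b, nc⟩
  · obtain ⟨G, H, f1, f2, c1, c2, ch1, ch2, ⟨b⟩, nc⟩ :=
      BoxProof.construction (n - m + 2) (m - 2) (by omega) (by omega)
    rw [show n - m + 2 + (m - 2) = n by omega] at ch1
    rw [show m - 2 + 2 = m by omega] at ch2
    exact ⟨H, G, f2, f1, c2, c1, ch2, ch1, ⟨b.symm⟩, BoxProof.iso_symm nc⟩
end

section
/- Let X and Y be bipartite graphs without isolated vertices. If the posets B_0(X) and B_0(Y) are isomorphic, then the graphs X and Y are isomorphic. -/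
/-- A graph is bipartite if it admits a homomorphism to `K₂`. -/
def SymmGraph.Bipartite (G : SymmGraph) : Prop :=
  ∃ c : G.V → Fin 2, ∀ ⦃x y⦄, G.E x y → c x ≠ c y

/-- `B₀(X)`: the unordered pairs `{σ, τ}` of nonempty subsets of `V(X)` with
`σ × τ ⊆ E(X)`. -/
def SymmGraph.B0 (X : SymmGraph) : Type :=
  {c : Set (Set X.V) // ∃ σ τ : Set X.V, σ.Nonempty ∧ τ.Nonempty ∧
    (∀ a ∈ σ, ∀ b ∈ τ, X.E a b) ∧ c = {σ, τ}}

/-- The ordering of `B₀(X)`: `α ≤ β` iff each member of `α` is contained in some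
member of `β`. -/
instance (X : SymmGraph) : LE X.B0 :=
  ⟨fun α β => ∀ σ ∈ α.1, ∃ τ ∈ β.1, σ ⊆ τ⟩

namespace B0R

open Classical
open scoped Classical

/- Fin 2 helpers -/
lemma f2a : ∀ p q : Fin 2, p ≠ q → p = 1 - q := by decide
lemma f2b : ∀ p q r : Fin 2, p ≠ q → r ≠ q → p = r := by decide
lemma f2c : ∀ j : Fin 2, ¬ j = 1 - j := by decide
lemma f2d : ∀ j : Fin 2, 1 - (1 - j) = j := by decide
lemma f2e : ∀ j : Fin 2, j = 0 ∨ j = 1 := by decide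

/-- minimality, order-theoretic (no antisymmetry needed) -/
def MinP {P : Type} [LE P] (a : P) : Prop := ∀ b, b ≤ a → a ≤ b

/-- "adjacent edges", order-theoretic -/
def AdjP {P : Type} [LE P] (e f : P) : Prop :=
  e ≠ f ∧ ∃ γ, e ≤ γ ∧ f ≤ γ ∧ ∀ m, m ≤ γ → MinP m → m = e ∨ m = f

lemma minP_map {P Q : Type} [LE P] [LE Q] (φ : P ≃o Q) {a : P} :
    MinP a ↔ MinP (φ a) := by
  constructor
  · intro h b hb
    have h1 : φ.symm b ≤ a := by
      rw [← φ.map_rel_iff, φ.apply_symm_apply]; exact hb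
    have h2 := h _ h1
    calc φ a ≤ φ (φ.symm b) := φ.map_rel_iff.mpr h2
    _ = b := φ.apply_symm_apply b
  · intro h b hb
    have h1 : φ b ≤ φ a := φ.map_rel_iff.mpr hb
    have h2 := h _ h1
    exact φ.map_rel_iff.mp h2

lemma adjP_map {P Q : Type} [LE P] [LE Q] (φ : P ≃o Q) {a b : P} :
    AdjP a b ↔ AdjP (φ a) (φ b) := by
  have key : ∀ (P Q : Type) [LE P] [LE Q] (φ : P ≃o Q) (a b : P),
      AdjP a b → AdjP (φ a) (φ b) := by
    intro P Q _ _ φ a b ⟨hne, γ, ha, hb, hall⟩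
    refine ⟨fun h => hne (φ.injective h), φ γ, φ.map_rel_iff.mpr ha,
      φ.map_rel_iff.mpr hb, ?_⟩
    intro m hm hmin
    have h1 : φ.symm m ≤ γ := by
      rw [← φ.map_rel_iff, φ.apply_symm_apply]; exact hm
    have h2 : MinP (φ.symm m) := by
      rw [minP_map φ, φ.apply_symm_apply]; exact hmin
    rcases hall _ h1 h2 with h | h
    · left; rw [← φ.apply_symm_apply m, h]
    · right; rw [← φ.apply_symm_apply m, h]
  constructor
  · exact key P Q φ a b
  · intro h
    have := key Q P φ.symm _ _ h
    simpa using this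

section OneGraph

variable {G : SymmGraph} (c : G.V → Fin 2) (hc : ∀ ⦃x y⦄, G.E x y → c x ≠ c y)

include hc in
lemma triFree {a b d : G.V} (h1 : G.E a b) (h2 : G.E b d) : ¬ G.E a d := by
  intro h3
  have q1 := hc h1; have q2 := hc h2; have q3 := hc h3
  revert q1 q2 q3
  generalize c a = p; generalize c b = q; generalize c d = r
  revert p q r; decide

/-- The color-`i` side of an element of `B0`. -/
def Aset (α : G.B0) (i : Fin 2) : Set G.V :=
  {v | c v = i ∧ ∃ s ∈ α.1, v ∈ s}

lemma le_def {α β : G.B0} : α ≤ β ↔ ∀ s ∈ α.1, ∃ t ∈ β.1, s ⊆ t := Iff.rfl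

lemma A_color {α : G.B0} {i : Fin 2} {v : G.V} (h : v ∈ Aset c α i) : c v = i := h.1

include hc in
lemma A_repr (α : G.B0) : ∃ σ τ : Set G.V, σ.Nonempty ∧ τ.Nonempty ∧
    (∀ a ∈ σ, ∀ b ∈ τ, G.E a b) ∧ α.1 = {σ, τ} ∧
    ∃ j : Fin 2, Aset c α j = σ ∧ Aset c α (1 - j) = τ := by
  obtain ⟨σ, τ, hσ, hτ, hE, hα⟩ := α.2
  refine ⟨σ, τ, hσ, hτ, hE, hα, ?_⟩
  obtain ⟨a0, ha0⟩ := hσ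
  obtain ⟨b0, hb0⟩ := hτ
  refine ⟨c a0, ?_, ?_⟩
  · ext v
    constructor
    · rintro ⟨hv, s, hs, hvs⟩
      rw [hα] at hs
      rcases hs with rfl | rfl
      · exact hvs
      · exfalso
        have h1 : c a0 ≠ c v := hc (hE a0 ha0 v hvs)
        exact h1 hv.symm
    · intro hv
      refine ⟨?_, σ, by rw [hα]; exact Set.mem_insert _ _, hv⟩
      exact f2b _ _ _ (hc (hE v hv b0 hb0)) (hc (hE a0 ha0 b0 hb0))
  · ext v
    constructor
    · rintro ⟨hv, s, hs, hvs⟩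
      rw [hα] at hs
      rcases hs with rfl | rfl
      · exfalso
        have h1 : c v ≠ c b0 := hc (hE v hvs b0 hb0)
        have h2 : c v = c a0 := f2b _ _ _ h1 (hc (hE a0 ha0 b0 hb0))
        rw [h2] at hv
        exact f2c _ hv
      · exact hvs
    · intro hv
      refine ⟨?_, τ, by rw [hα]; exact Set.mem_insert_iff.mpr (Or.inr rfl), hv⟩
      exact f2a _ _ (fun h => (hc (hE a0 ha0 v hv)) h.symm)

include hc in
lemma A_pair (α : G.B0) : α.1 = {Aset c α 0, Aset c α 1} := by
  obtain ⟨σ, τ, hσ, hτ, hE, hα, j, h0, h1⟩ := A_repr c hc α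
  rcases f2e j with rfl | rfl
  · rw [hα, h0]
    rw [show (1 - 0 : Fin 2) = 1 by decide] at h1
    rw [h1]
  · rw [show (1 - 1 : Fin 2) = 0 by decide] at h1
    rw [hα, h1, h0]
    exact Set.pair_comm _ _

include hc in
lemma A_nonempty (α : G.B0) (i : Fin 2) : (Aset c α i).Nonempty := by
  obtain ⟨σ, τ, hσ, hτ, hE, hα, j, h0, h1⟩ := A_repr c hc α
  rcases f2e j with rfl | rfl <;> rcases f2e i with rfl | rfl <;>
    simp only [show (1 - 0 : Fin 2) = 1 by decide, show (1 - 1 : Fin 2) = 0 by decide] at h0 h1 <;>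
    [rw [h0]; rw [h1]; rw [h1]; rw [h0]] <;> assumption

include hc in
lemma A_complete (α : G.B0) {a b : G.V} (ha : a ∈ Aset c α 0) (hb : b ∈ Aset c α 1) :
    G.E a b := by
  obtain ⟨σ, τ, hσ, hτ, hE, hα, j, h0, h1⟩ := A_repr c hc α
  rcases f2e j with rfl | rfl
  · rw [show (1 - 0 : Fin 2) = 1 by decide] at h1
    rw [h0] at ha; rw [h1] at hb
    exact hE a ha b hb
  · rw [show (1 - 1 : Fin 2) = 0 by decide] at h1
    rw [h1] at ha; rw [h0] at hb
    exact G.symm (hE b hb a ha)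

include hc in
lemma le_iff {α β : G.B0} :
    α ≤ β ↔ Aset c α 0 ⊆ Aset c β 0 ∧ Aset c α 1 ⊆ Aset c β 1 := by
  constructor
  · intro h
    constructor
    · obtain ⟨t, ht, hsub⟩ := h (Aset c α 0) (by rw [A_pair c hc α]; exact Set.mem_insert _ _)
      rw [A_pair c hc β] at ht
      rcases ht with rfl | rfl
      · exact hsub
      · exfalso
        obtain ⟨v, hv⟩ := A_nonempty c hc α 0
        have h0 : c v = 0 := A_color c hv
        have h1 : c v = 1 := A_color c (hsub hv)
        rw [h0] at h1; exact absurd h1 (by decide)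
    · obtain ⟨t, ht, hsub⟩ := h (Aset c α 1)
        (by rw [A_pair c hc α]; exact Set.mem_insert_iff.mpr (Or.inr rfl))
      rw [A_pair c hc β] at ht
      rcases ht with rfl | rfl
      · exfalso
        obtain ⟨v, hv⟩ := A_nonempty c hc α 1
        have h0 : c v = 1 := A_color c hv
        have h1 : c v = 0 := A_color c (hsub hv)
        rw [h0] at h1; exact absurd h1 (by decide)
      · exact hsub
  · rintro ⟨h0, h1⟩ s hs
    rw [A_pair c hc α] at hs
    rcases hs with rfl | rfl
    · exact ⟨Aset c β 0, by rw [A_pair c hc β]; exact Set.mem_insert _ _, h0⟩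
    · exact ⟨Aset c β 1,
        by rw [A_pair c hc β]; exact Set.mem_insert_iff.mpr (Or.inr rfl), h1⟩

include hc in
lemma ext_A {α β : G.B0} (h0 : Aset c α 0 = Aset c β 0)
    (h1 : Aset c α 1 = Aset c β 1) : α = β :=
  Subtype.ext (by rw [A_pair c hc α, A_pair c hc β, h0, h1])

/-- constructor -/
def mkB0 (s t : Set G.V) (hs : s.Nonempty) (ht : t.Nonempty)
    (hE : ∀ a ∈ s, ∀ b ∈ t, G.E a b) : G.B0 :=
  ⟨{s, t}, s, t, hs, ht, hE, rfl⟩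

lemma A_mk {s t : Set G.V} {hs ht hE} (hs0 : ∀ a ∈ s, c a = 0) (ht1 : ∀ b ∈ t, c b = 1) :
    Aset c (mkB0 s t hs ht hE) 0 = s ∧ Aset c (mkB0 s t hs ht hE) 1 = t := by
  constructor
  · ext v
    constructor
    · rintro ⟨hv, u, hu, hvu⟩
      rcases hu with rfl | rfl
      · exact hvu
      · exfalso; rw [ht1 v hvu] at hv; exact absurd hv (by decide)
    · intro hv
      exact ⟨hs0 v hv, s, Set.mem_insert _ _, hv⟩
  · ext v
    constructor
    · rintro ⟨hv, u, hu, hvu⟩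
      rcases hu with rfl | rfl
      · exfalso; rw [hs0 v hvu] at hv; exact absurd hv (by decide)
      · exact hvu
    · intro hv
      exact ⟨ht1 v hv, t, Set.mem_insert_iff.mpr (Or.inr rfl), hv⟩

/-- the edge element -/
noncomputable def edg {a b : G.V} (h : G.E a b) : G.B0 :=
  if c a = 0 then
    mkB0 {a} {b} ⟨a, rfl⟩ ⟨b, rfl⟩
      (by rintro x rfl y rfl; exact h)
  else
    mkB0 {b} {a} ⟨b, rfl⟩ ⟨a, rfl⟩
      (by rintro x rfl y rfl; exact G.symm h)

include hc in
lemma A_edg {a b : G.V} (h : G.E a b) (i : Fin 2) :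
    Aset c (edg c h) i = {v | c v = i ∧ (v = a ∨ v = b)} := by
  have hab := hc h
  by_cases ha : c a = 0
  · have hb : c b = 1 := by
      rcases f2e (c b) with h' | h'
      · exact absurd (ha.trans h'.symm) hab
      · exact h'
    rw [edg, if_pos ha]
    obtain ⟨h0, h1⟩ := A_mk c (s := {a}) (t := {b}) (hs := ⟨a, rfl⟩) (ht := ⟨b, rfl⟩)
      (hE := by
        rintro x hx y hy
        rw [Set.mem_singleton_iff] at hx hy
        subst hx; subst hy; exact h)
      (hs0 := by
        rintro x hx; rw [Set.mem_singleton_iff] at hx; subst hx; exact ha)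
      (ht1 := by
        rintro x hx; rw [Set.mem_singleton_iff] at hx; subst hx; exact hb)
    rcases f2e i with rfl | rfl
    · rw [h0]; ext v
      simp only [Set.mem_singleton_iff, Set.mem_setOf_eq]
      constructor
      · rintro rfl; exact ⟨ha, Or.inl rfl⟩
      · rintro ⟨hv, rfl | rfl⟩
        · rfl
        · rw [hb] at hv; exact absurd hv (by decide)
    · rw [h1]; ext v
      simp only [Set.mem_singleton_iff, Set.mem_setOf_eq]
      constructor
      · rintro rfl; exact ⟨hb, Or.inr rfl⟩
      · rintro ⟨hv, rfl | rfl⟩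
        · rw [ha] at hv; exact absurd hv (by decide)
        · rfl
  · have ha1 : c a = 1 := by rcases f2e (c a) with h' | h'; exact absurd h' ha; exact h'
    have hb : c b = 0 := by
      rcases f2e (c b) with h' | h'
      · exact h'
      · exfalso; exact hab (ha1.trans h'.symm)
    rw [edg, if_neg ha]
    obtain ⟨h0, h1⟩ := A_mk c (s := {b}) (t := {a}) (hs := ⟨b, rfl⟩) (ht := ⟨a, rfl⟩)
      (hE := by
        rintro x hx y hy
        rw [Set.mem_singleton_iff] at hx hy
        subst hx; subst hy; exact G.symm h)
      (hs0 := by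
        rintro x hx; rw [Set.mem_singleton_iff] at hx; subst hx; exact hb)
      (ht1 := by
        rintro x hx; rw [Set.mem_singleton_iff] at hx; subst hx; exact ha1)
    rcases f2e i with rfl | rfl
    · rw [h0]; ext v
      simp only [Set.mem_singleton_iff, Set.mem_setOf_eq]
      constructor
      · rintro rfl; exact ⟨hb, Or.inr rfl⟩
      · rintro ⟨hv, rfl | rfl⟩
        · rw [ha1] at hv; exact absurd hv (by decide)
        · rfl
    · rw [h1]; ext v
      simp only [Set.mem_singleton_iff, Set.mem_setOf_eq]
      constructor
      · rintro rfl; exact ⟨ha1, Or.inl rfl⟩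
      · rintro ⟨hv, rfl | rfl⟩
        · rfl
        · rw [hb] at hv; exact absurd hv (by decide)

/-- vertex membership in an element -/
def vmem (x : G.V) (α : G.B0) : Prop := x ∈ Aset c α (c x)

include hc in
lemma vmem_edg {a b x : G.V} (h : G.E a b) :
    vmem c x (edg c h) ↔ x = a ∨ x = b := by
  rw [vmem, A_edg c hc]
  simp only [Set.mem_setOf_eq, true_and]

/-- canonical endpoint of given color -/
noncomputable def ep (α : G.B0) (i : Fin 2) : G.V :=
  haveI : Nonempty G.V := ⟨α.2.choose_spec.choose_spec.1.choose⟩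
  Classical.epsilon (· ∈ Aset c α i)

include hc in
lemma ep_mem (α : G.B0) (i : Fin 2) : ep c α i ∈ Aset c α i := by
  unfold ep
  exact Classical.epsilon_spec (A_nonempty c hc α i)

include hc in
lemma ep_color (α : G.B0) (i : Fin 2) : c (ep c α i) = i :=
  A_color c (ep_mem c hc α i)

include hc in
lemma ep_vmem (α : G.B0) (i : Fin 2) : vmem c (ep c α i) α := by
  rw [vmem, ep_color c hc]
  exact ep_mem c hc α i

include hc in
lemma ep_edge (α : G.B0) : G.E (ep c α 0) (ep c α 1) :=
  A_complete c hc α (ep_mem c hc α 0) (ep_mem c hc α 1)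

include hc in
lemma ep_ne (α : G.B0) : ep c α 0 ≠ ep c α 1 := by
  intro h
  have h0 := ep_color c hc α 0
  have h1 := ep_color c hc α 1
  rw [h] at h0
  rw [h0] at h1
  exact absurd h1 (by decide)

include hc in
lemma minP_edg {a b : G.V} (h : G.E a b) : MinP (edg c h) := by
  intro β hβ
  rw [le_iff c hc] at hβ ⊢
  have hsub : ∀ i : Fin 2, ∀ u ∈ Aset c (edg c h) i, ∀ v ∈ Aset c (edg c h) i, u = v := by
    intro i u hu v hv
    rw [A_edg c hc] at hu hv
    obtain ⟨hcu, hu⟩ := hu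
    obtain ⟨hcv, hv⟩ := hv
    have hab := hc h
    rcases hu with rfl | rfl <;> rcases hv with rfl | rfl <;>
      first | rfl | (exfalso; exact hab (hcu.trans hcv.symm)) |
        (exfalso; exact hab (hcv.trans hcu.symm))
  constructor
  · intro u hu
    obtain ⟨v, hv⟩ := A_nonempty c hc β 0
    have := hsub 0 _ (hβ.1 hv) _ hu
    rw [← this]; exact hv
  · intro u hu
    obtain ⟨v, hv⟩ := A_nonempty c hc β 1
    have := hsub 1 _ (hβ.2 hv) _ hu
    rw [← this]; exact hv

include hc in
lemma min_eq (α : G.B0) (hm : MinP α) :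
    Aset c α 0 = {ep c α 0} ∧ Aset c α 1 = {ep c α 1} := by
  have hE := ep_edge c hc α
  have hle : edg c hE ≤ α := by
    rw [le_iff c hc]
    constructor
    · intro v hv
      rw [A_edg c hc] at hv
      obtain ⟨hcv, hv⟩ := hv
      rcases hv with rfl | rfl
      · exact ep_mem c hc α 0
      · exfalso; rw [ep_color c hc] at hcv; exact absurd hcv (by decide)
    · intro v hv
      rw [A_edg c hc] at hv
      obtain ⟨hcv, hv⟩ := hv
      rcases hv with rfl | rfl
      · exfalso; rw [ep_color c hc] at hcv; exact absurd hcv (by decide)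
      · exact ep_mem c hc α 1
  have hge := hm _ hle
  rw [le_iff c hc] at hge
  constructor
  · apply Set.eq_singleton_iff_nonempty_unique_mem.mpr
    refine ⟨⟨_, ep_mem c hc α 0⟩, ?_⟩
    intro v hv
    have := hge.1 hv
    rw [A_edg c hc] at this
    obtain ⟨hcv, hv'⟩ := this
    rcases hv' with rfl | rfl
    · rfl
    · exfalso; rw [ep_color c hc] at hcv; exact absurd hcv (by decide)
  · apply Set.eq_singleton_iff_nonempty_unique_mem.mpr
    refine ⟨⟨_, ep_mem c hc α 1⟩, ?_⟩
    intro v hv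
    have := hge.2 hv
    rw [A_edg c hc] at this
    obtain ⟨hcv, hv'⟩ := this
    rcases hv' with rfl | rfl
    · exfalso; rw [ep_color c hc] at hcv; exact absurd hcv (by decide)
    · rfl

include hc in
lemma vmem_min {α : G.B0} {x : G.V} (hm : MinP α) (hx : vmem c x α) :
    x = ep c α (c x) := by
  rcases f2e (c x) with h | h <;> rw [vmem] at hx <;> rw [h] at hx ⊢
  · have := (min_eq c hc α hm).1
    rw [this] at hx; exact hx
  · have := (min_eq c hc α hm).2
    rw [this] at hx; exact hx

include hc in
lemma ep_uniq {α : G.B0} {v : G.V} {i : Fin 2} (hm : MinP α) (hv : vmem c v α)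
    (hci : c v = i) : ep c α i = v := by
  have := vmem_min c hc hm hv
  rw [hci] at this
  exact this.symm

include hc in
lemma vmem_cases {α : G.B0} {x : G.V} (hm : MinP α) (hx : vmem c x α) :
    x = ep c α 0 ∨ x = ep c α 1 := by
  have := vmem_min c hc hm hx
  rcases f2e (c x) with h | h <;> rw [h] at this
  · exact Or.inl this
  · exact Or.inr this

include hc in
lemma vmem_E {α : G.B0} {u v : G.V} (hm : MinP α) (hu : vmem c u α)
    (hv : vmem c v α) (huv : u ≠ v) : G.E u v := by
  rcases vmem_cases c hc hm hu with rfl | rfl <;> rcases vmem_cases c hc hm hv with h | h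
  · exact absurd h.symm huv
  · rw [h]; exact ep_edge c hc α
  · rw [h]; exact G.symm (ep_edge c hc α)
  · exact absurd h.symm huv

include hc in
lemma two_vmem_eq {m m' : G.B0} {u v : G.V} (hm : MinP m) (hm' : MinP m')
    (hu : vmem c u m) (hu' : vmem c u m') (hv : vmem c v m) (hv' : vmem c v m')
    (huv : u ≠ v) : m = m' := by
  have hcuv : c u ≠ c v := by
    intro h
    have e1 := vmem_min c hc hm hu
    have e2 := vmem_min c hc hm hv
    rw [h] at e1
    exact huv (e1.trans e2.symm)
  apply ext_A c hc
  case h0 =>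
    rw [(min_eq c hc m hm).1, (min_eq c hc m' hm').1]
    rcases f2e (c u) with h | h
    · rw [ep_uniq c hc hm hu h, ep_uniq c hc hm' hu' h]
    · have hcv : c v = 0 := by
        rcases f2e (c v) with h' | h'
        · exact h'
        · exact absurd (h.trans h'.symm) hcuv
      rw [ep_uniq c hc hm hv hcv, ep_uniq c hc hm' hv' hcv]
  case h1 =>
    rw [(min_eq c hc m hm).2, (min_eq c hc m' hm').2]
    rcases f2e (c u) with h | h
    · have hcv : c v = 1 := by
        rcases f2e (c v) with h' | h'
        · exact absurd (h.trans h'.symm) hcuv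
        · exact h'
      rw [ep_uniq c hc hm hv hcv, ep_uniq c hc hm' hv' hcv]
    · rw [ep_uniq c hc hm hu h, ep_uniq c hc hm' hu' h]

include hc in
lemma adj_of_share {e f : G.B0} {x : G.V} (hme : MinP e) (hmf : MinP f)
    (hef : e ≠ f) (hxe : vmem c x e) (hxf : vmem c x f) : AdjP e f := by
  refine ⟨hef, ?_⟩
  rcases f2e (c x) with hcx | hcx
  · -- x has color 0
    have hxe0 : ep c e 0 = x := ep_uniq c hc hme hxe hcx
    have hxf0 : ep c f 0 = x := ep_uniq c hc hmf hxf hcx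
    have hExb : G.E x (ep c e 1) := by rw [← hxe0]; exact ep_edge c hc e
    have hExb' : G.E x (ep c f 1) := by rw [← hxf0]; exact ep_edge c hc f
    have hcomp : ∀ u ∈ ({x} : Set G.V), ∀ v ∈ ({ep c e 1, ep c f 1} : Set G.V), G.E u v := by
      rintro u hu v hv
      rw [Set.mem_singleton_iff] at hu
      subst hu
      rcases hv with rfl | hv
      · exact hExb
      · rw [Set.mem_singleton_iff] at hv; subst hv; exact hExb'
    refine ⟨mkB0 {x} {ep c e 1, ep c f 1} ⟨x, rfl⟩ ⟨ep c e 1, Set.mem_insert _ _⟩ hcomp,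
      ?_, ?_, ?_⟩
    all_goals
      obtain ⟨hA0, hA1⟩ := A_mk c (s := {x}) (t := {ep c e 1, ep c f 1})
        (hs := ⟨x, rfl⟩) (ht := ⟨ep c e 1, Set.mem_insert _ _⟩) (hE := hcomp)
        (hs0 := by rintro u hu; rw [Set.mem_singleton_iff] at hu; subst hu; exact hcx)
        (ht1 := by
          rintro u (rfl | hu)
          · exact ep_color c hc e 1
          · rw [Set.mem_singleton_iff] at hu; subst hu; exact ep_color c hc f 1)
    case inl.refine_1 =>
      rw [le_iff c hc, hA0, hA1, (min_eq c hc e hme).1, (min_eq c hc e hme).2, hxe0]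
      constructor
      · exact subset_rfl
      · intro u hu
        rw [Set.mem_singleton_iff] at hu
        subst hu
        exact Set.mem_insert _ _
    case inl.refine_2 =>
      rw [le_iff c hc, hA0, hA1, (min_eq c hc f hmf).1, (min_eq c hc f hmf).2, hxf0]
      constructor
      · exact subset_rfl
      · intro u hu
        rw [Set.mem_singleton_iff] at hu
        subst hu
        exact Set.mem_insert_iff.mpr (Or.inr rfl)
    case inl.refine_3 =>
      intro m hmle hmm
      rw [le_iff c hc, hA0, hA1] at hmle
      have hm0 : ep c m 0 = x := hmle.1 (ep_mem c hc m 0)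
      have hm1 : ep c m 1 ∈ ({ep c e 1, ep c f 1} : Set G.V) := hmle.2 (ep_mem c hc m 1)
      rcases hm1 with hm1 | hm1
      · left
        apply ext_A c hc
        · rw [(min_eq c hc m hmm).1, (min_eq c hc e hme).1, hm0, hxe0]
        · rw [(min_eq c hc m hmm).2, (min_eq c hc e hme).2, hm1]
      · rw [Set.mem_singleton_iff] at hm1
        right
        apply ext_A c hc
        · rw [(min_eq c hc m hmm).1, (min_eq c hc f hmf).1, hm0, hxf0]
        · rw [(min_eq c hc m hmm).2, (min_eq c hc f hmf).2, hm1]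
  · -- x has color 1
    have hxe1 : ep c e 1 = x := ep_uniq c hc hme hxe hcx
    have hxf1 : ep c f 1 = x := ep_uniq c hc hmf hxf hcx
    have hExb : G.E (ep c e 0) x := by rw [← hxe1]; exact ep_edge c hc e
    have hExb' : G.E (ep c f 0) x := by rw [← hxf1]; exact ep_edge c hc f
    have hcomp : ∀ u ∈ ({ep c e 0, ep c f 0} : Set G.V), ∀ v ∈ ({x} : Set G.V), G.E u v := by
      rintro u hu v hv
      rw [Set.mem_singleton_iff] at hv
      subst hv
      rcases hu with rfl | hu
      · exact hExb
      · rw [Set.mem_singleton_iff] at hu; subst hu; exact hExb'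
    refine ⟨mkB0 {ep c e 0, ep c f 0} {x} ⟨ep c e 0, Set.mem_insert _ _⟩ ⟨x, rfl⟩ hcomp,
      ?_, ?_, ?_⟩
    all_goals
      obtain ⟨hA0, hA1⟩ := A_mk c (s := {ep c e 0, ep c f 0}) (t := {x})
        (hs := ⟨ep c e 0, Set.mem_insert _ _⟩) (ht := ⟨x, rfl⟩) (hE := hcomp)
        (hs0 := by
          rintro u (rfl | hu)
          · exact ep_color c hc e 0
          · rw [Set.mem_singleton_iff] at hu; subst hu; exact ep_color c hc f 0)
        (ht1 := by rintro u hu; rw [Set.mem_singleton_iff] at hu; subst hu; exact hcx)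
    case inr.refine_1 =>
      rw [le_iff c hc, hA0, hA1, (min_eq c hc e hme).1, (min_eq c hc e hme).2, hxe1]
      constructor
      · intro u hu
        rw [Set.mem_singleton_iff] at hu
        subst hu
        exact Set.mem_insert _ _
      · exact subset_rfl
    case inr.refine_2 =>
      rw [le_iff c hc, hA0, hA1, (min_eq c hc f hmf).1, (min_eq c hc f hmf).2, hxf1]
      constructor
      · intro u hu
        rw [Set.mem_singleton_iff] at hu
        subst hu
        exact Set.mem_insert_iff.mpr (Or.inr rfl)
      · exact subset_rfl
    case inr.refine_3 =>
      intro m hmle hmm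
      rw [le_iff c hc, hA0, hA1] at hmle
      have hm1 : ep c m 1 = x := hmle.2 (ep_mem c hc m 1)
      have hm0 : ep c m 0 ∈ ({ep c e 0, ep c f 0} : Set G.V) := hmle.1 (ep_mem c hc m 0)
      rcases hm0 with hm0 | hm0
      · left
        apply ext_A c hc
        · rw [(min_eq c hc m hmm).1, (min_eq c hc e hme).1, hm0]
        · rw [(min_eq c hc m hmm).2, (min_eq c hc e hme).2, hm1, hxe1]
      · rw [Set.mem_singleton_iff] at hm0
        right
        apply ext_A c hc
        · rw [(min_eq c hc m hmm).1, (min_eq c hc f hmf).1, hm0]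
        · rw [(min_eq c hc m hmm).2, (min_eq c hc f hmf).2, hm1, hxf1]

include hc in
lemma share_of_adj {e f : G.B0} (hme : MinP e) (hmf : MinP f) (hadj : AdjP e f) :
    ∃ x, vmem c x e ∧ vmem c x f := by
  obtain ⟨hne, γ, he, hf, hall⟩ := hadj
  rw [le_iff c hc] at he hf
  have ha : ep c e 0 ∈ Aset c γ 0 := by
    apply he.1; rw [(min_eq c hc e hme).1]; rfl
  have hb' : ep c f 1 ∈ Aset c γ 1 := by
    apply hf.2; rw [(min_eq c hc f hmf).2]; rfl
  have hE : G.E (ep c e 0) (ep c f 1) := A_complete c hc γ ha hb'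
  have hmle : edg c hE ≤ γ := by
    rw [le_iff c hc]
    constructor
    · intro v hv
      rw [A_edg c hc] at hv
      obtain ⟨hcv, hv⟩ := hv
      rcases hv with rfl | rfl
      · exact ha
      · exfalso; rw [ep_color c hc] at hcv; exact absurd hcv (by decide)
    · intro v hv
      rw [A_edg c hc] at hv
      obtain ⟨hcv, hv⟩ := hv
      rcases hv with rfl | rfl
      · exfalso; rw [ep_color c hc] at hcv; exact absurd hcv (by decide)
      · exact hb'
  rcases hall _ hmle (minP_edg c hc hE) with hm | hm
  · refine ⟨ep c f 1, ?_, ep_vmem c hc f 1⟩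
    rw [← hm]
    rw [vmem_edg c hc]
    exact Or.inr rfl
  · refine ⟨ep c e 0, ep_vmem c hc e 0, ?_⟩
    rw [← hm]
    rw [vmem_edg c hc]
    exact Or.inl rfl

include hc in
lemma three_share {m1 m2 m3 : G.B0} {y : G.V} (h1 : MinP m1) (h2 : MinP m2)
    (h3 : MinP m3) (h12 : m1 ≠ m2)
    (hy1 : vmem c y m1) (hy2 : vmem c y m2)
    (hw1 : ∃ w, vmem c w m3 ∧ vmem c w m1) (hw2 : ∃ w, vmem c w m3 ∧ vmem c w m2) :
    vmem c y m3 := by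
  obtain ⟨w1, hw13, hw11⟩ := hw1
  obtain ⟨w2, hw23, hw22⟩ := hw2
  by_cases hq1 : w1 = y
  · subst hq1; exact hw13
  by_cases hq2 : w2 = y
  · subst hq2; exact hw23
  exfalso
  have hE1 : G.E y w1 := vmem_E c hc h1 hy1 hw11 (fun h => hq1 h.symm)
  have hE2 : G.E y w2 := vmem_E c hc h2 hy2 hw22 (fun h => hq2 h.symm)
  have hw12 : w1 ≠ w2 := by
    intro h
    subst h
    exact h12 (two_vmem_eq c hc h1 h2 hy1 hy2 hw11 hw22 (fun h => hq1 h.symm))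
  have hE3 : G.E w1 w2 := vmem_E c hc h3 hw13 hw23 hw12
  exact triFree c hc hE1 hE3 hE2

/-- has at least two distinct edges -/
def vdeg2 (x : G.V) : Prop :=
  ∃ e f : G.B0, MinP e ∧ MinP f ∧ e ≠ f ∧ vmem c x e ∧ vmem c x f

end OneGraph

section TwoGraphs

variable {X Y : SymmGraph}

lemma exists_edge (cX : X.V → Fin 2) (hcX : ∀ ⦃x y⦄, X.E x y → cX x ≠ cX y)
    (hX : X.NoIsolated) (x : X.V) : ∃ e : X.B0, MinP e ∧ vmem cX x e := by
  obtain ⟨b, hb⟩ := hX x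
  exact ⟨edg cX hb, minP_edg cX hcX hb, (vmem_edg cX hcX hb).mpr (Or.inl rfl)⟩

noncomputable def theEdge (cX : X.V → Fin 2) (hcX : ∀ ⦃x y⦄, X.E x y → cX x ≠ cX y)
    (hX : X.NoIsolated) (x : X.V) : X.B0 :=
  Classical.choose (exists_edge cX hcX hX x)

lemma theEdge_spec (cX : X.V → Fin 2) (hcX : ∀ ⦃x y⦄, X.E x y → cX x ≠ cX y)
    (hX : X.NoIsolated) (x : X.V) :
    MinP (theEdge cX hcX hX x) ∧ vmem cX x (theEdge cX hcX hX x) :=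
  Classical.choose_spec (exists_edge cX hcX hX x)

lemma edge_uniq (cX : X.V → Fin 2) (hcX : ∀ ⦃x y⦄, X.E x y → cX x ≠ cX y)
    (hX : X.NoIsolated) {x : X.V} (hd : ¬ vdeg2 cX x) {e : X.B0}
    (hme : MinP e) (hxe : vmem cX x e) : e = theEdge cX hcX hX x := by
  by_contra h
  exact hd ⟨e, theEdge cX hcX hX x, hme, (theEdge_spec cX hcX hX x).1, h, hxe,
    (theEdge_spec cX hcX hX x).2⟩

lemma not_deg2_uniq (cX : X.V → Fin 2) {x : X.V} (hd : ¬ vdeg2 cX x) {e f : X.B0}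
    (hme : MinP e) (hxe : vmem cX x e) (hmf : MinP f) (hxf : vmem cX x f) : e = f := by
  by_contra h
  exact hd ⟨e, f, hme, hmf, h, hxe, hxf⟩

lemma deg2_other (cX : X.V → Fin 2) {x : X.V} (hd : vdeg2 cX x) (e0 : X.B0) :
    ∃ e, MinP e ∧ vmem cX x e ∧ e ≠ e0 := by
  obtain ⟨e, f, hme, hmf, hef, hxe, hxf⟩ := hd
  by_cases h : e = e0
  · exact ⟨f, hmf, hxf, by rw [← h]; exact fun hh => hef hh.symm⟩
  · exact ⟨e, hme, hxe, h⟩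

lemma exists_CV (cX : X.V → Fin 2) (hcX : ∀ ⦃x y⦄, X.E x y → cX x ≠ cX y)
    (cY : Y.V → Fin 2) (hcY : ∀ ⦃x y⦄, Y.E x y → cY x ≠ cY y)
    (hX : X.NoIsolated) (φ : X.B0 ≃o Y.B0) (x : X.V) :
    ∃ y : Y.V, ∀ e : X.B0, MinP e → vmem cX x e → vmem cY y (φ e) := by
  by_cases hd : vdeg2 cX x
  · obtain ⟨e1, f1, hme1, hmf1, hne1, hx1, hx2⟩ := hd
    have hadj : AdjP e1 f1 := adj_of_share cX hcX hme1 hmf1 hne1 hx1 hx2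
    obtain ⟨y, hy1, hy2⟩ := share_of_adj cY hcY ((minP_map φ).mp hme1)
      ((minP_map φ).mp hmf1) ((adjP_map φ).mp hadj)
    refine ⟨y, ?_⟩
    intro g hg hxg
    by_cases hge : g = e1
    · subst hge; exact hy1
    by_cases hgf : g = f1
    · subst hgf; exact hy2
    have ha1 : AdjP g e1 := adj_of_share cX hcX hg hme1 hge hxg hx1
    have ha2 : AdjP g f1 := adj_of_share cX hcX hg hmf1 hgf hxg hx2
    obtain ⟨w1, hw1g, hw1e⟩ := share_of_adj cY hcY ((minP_map φ).mp hg)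
      ((minP_map φ).mp hme1) ((adjP_map φ).mp ha1)
    obtain ⟨w2, hw2g, hw2f⟩ := share_of_adj cY hcY ((minP_map φ).mp hg)
      ((minP_map φ).mp hmf1) ((adjP_map φ).mp ha2)
    exact three_share cY hcY ((minP_map φ).mp hme1) ((minP_map φ).mp hmf1)
      ((minP_map φ).mp hg) (fun h => hne1 (φ.injective h)) hy1 hy2
      ⟨w1, hw1g, hw1e⟩ ⟨w2, hw2g, hw2f⟩
  · obtain ⟨e0, hme0, hxe0⟩ := exists_edge cX hcX hX x
    refine ⟨ep cY (φ e0) 0, ?_⟩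
    intro g hg hxg
    have hg0 : g = e0 := by
      by_contra h
      exact hd ⟨g, e0, hg, hme0, h, hxg, hxe0⟩
    subst hg0
    exact ep_vmem cY hcY (φ g) 0

noncomputable def CV (cX : X.V → Fin 2) (hcX : ∀ ⦃x y⦄, X.E x y → cX x ≠ cX y)
    (cY : Y.V → Fin 2) (hcY : ∀ ⦃x y⦄, Y.E x y → cY x ≠ cY y)
    (hX : X.NoIsolated) (φ : X.B0 ≃o Y.B0) (x : X.V) : Y.V :=
  Classical.choose (exists_CV cX hcX cY hcY hX φ x)

lemma CV_spec (cX : X.V → Fin 2) (hcX : ∀ ⦃x y⦄, X.E x y → cX x ≠ cX y)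
    (cY : Y.V → Fin 2) (hcY : ∀ ⦃x y⦄, Y.E x y → cY x ≠ cY y)
    (hX : X.NoIsolated) (φ : X.B0 ≃o Y.B0) (x : X.V) :
    ∀ e : X.B0, MinP e → vmem cX x e → vmem cY (CV cX hcX cY hcY hX φ x) (φ e) :=
  Classical.choose_spec (exists_CV cX hcX cY hcY hX φ x)

lemma CV_uniq (cX : X.V → Fin 2) (hcX : ∀ ⦃x y⦄, X.E x y → cX x ≠ cX y)
    (cY : Y.V → Fin 2) (hcY : ∀ ⦃x y⦄, Y.E x y → cY x ≠ cY y)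
    (φ : X.B0 ≃o Y.B0) {x : X.V} (hd : vdeg2 cX x) {y y' : Y.V}
    (hy : ∀ e : X.B0, MinP e → vmem cX x e → vmem cY y (φ e))
    (hy' : ∀ e : X.B0, MinP e → vmem cX x e → vmem cY y' (φ e)) : y = y' := by
  obtain ⟨e1, f1, hme1, hmf1, hne1, hx1, hx2⟩ := hd
  by_contra h
  exact (fun hh => hne1 (φ.injective hh)) (two_vmem_eq cY hcY ((minP_map φ).mp hme1)
    ((minP_map φ).mp hmf1) (hy e1 hme1 hx1) (hy f1 hmf1 hx2)
    (hy' e1 hme1 hx1) (hy' f1 hmf1 hx2) h)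

lemma deg2_CV (cX : X.V → Fin 2) (hcX : ∀ ⦃x y⦄, X.E x y → cX x ≠ cX y)
    (cY : Y.V → Fin 2) (hcY : ∀ ⦃x y⦄, Y.E x y → cY x ≠ cY y)
    (hX : X.NoIsolated) (φ : X.B0 ≃o Y.B0) {x : X.V} (hd : vdeg2 cX x) :
    vdeg2 cY (CV cX hcX cY hcY hX φ x) := by
  obtain ⟨e1, f1, hme1, hmf1, hne1, hx1, hx2⟩ := hd
  exact ⟨φ e1, φ f1, (minP_map φ).mp hme1, (minP_map φ).mp hmf1,
    fun h => hne1 (φ.injective h),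
    CV_spec cX hcX cY hcY hX φ x e1 hme1 hx1,
    CV_spec cX hcX cY hcY hX φ x f1 hmf1 hx2⟩

lemma back_spec (cX : X.V → Fin 2) (hcX : ∀ ⦃x y⦄, X.E x y → cX x ≠ cX y)
    (cY : Y.V → Fin 2) (hcY : ∀ ⦃x y⦄, Y.E x y → cY x ≠ cY y)
    (hX : X.NoIsolated) (φ : X.B0 ≃o Y.B0) {x : X.V} (hd : vdeg2 cX x) :
    ∀ m : Y.B0, MinP m → vmem cY (CV cX hcX cY hcY hX φ x) m →
      vmem cX x (φ.symm m) := by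
  intro m hm hym
  by_contra hnx
  obtain ⟨e1, f1, hme1, hmf1, hne1, hx1, hx2⟩ := hd
  have hCV := CV_spec cX hcX cY hcY hX φ x
  have hnm1 : m ≠ φ e1 := by
    intro h
    apply hnx
    rw [h, φ.symm_apply_apply]
    exact hx1
  have hnm2 : m ≠ φ f1 := by
    intro h
    apply hnx
    rw [h, φ.symm_apply_apply]
    exact hx2
  have hadj1 : AdjP (φ.symm m) e1 := by
    rw [adjP_map φ, φ.apply_symm_apply]
    exact adj_of_share cY hcY hm ((minP_map φ).mp hme1) hnm1 hym (hCV e1 hme1 hx1)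
  have hadj2 : AdjP (φ.symm m) f1 := by
    rw [adjP_map φ, φ.apply_symm_apply]
    exact adj_of_share cY hcY hm ((minP_map φ).mp hmf1) hnm2 hym (hCV f1 hmf1 hx2)
  have hmsm : MinP (φ.symm m) := (minP_map φ.symm).mp hm
  obtain ⟨w1, hw1s, hw1e⟩ := share_of_adj cX hcX hmsm hme1 hadj1
  obtain ⟨w2, hw2s, hw2f⟩ := share_of_adj cX hcX hmsm hmf1 hadj2
  have hw1x : x ≠ w1 := fun h => hnx (h ▸ hw1s)
  have hw2x : x ≠ w2 := fun h => hnx (h ▸ hw2s)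
  have hw12 : w1 ≠ w2 := by
    intro h
    subst h
    exact hne1 (two_vmem_eq cX hcX hme1 hmf1 hx1 hx2 hw1e hw2f hw1x)
  have hE1 : X.E x w1 := vmem_E cX hcX hme1 hx1 hw1e hw1x
  have hE2 : X.E x w2 := vmem_E cX hcX hmf1 hx2 hw2f hw2x
  have hE3 : X.E w1 w2 := vmem_E cX hcX hmsm hw1s hw2s hw12
  exact triFree cX hcX hE1 hE3 hE2

lemma LI1 (cX : X.V → Fin 2) (hcX : ∀ ⦃x y⦄, X.E x y → cX x ≠ cX y)
    (cY : Y.V → Fin 2) (hcY : ∀ ⦃x y⦄, Y.E x y → cY x ≠ cY y)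
    (hX : X.NoIsolated) (hY : Y.NoIsolated) (φ : X.B0 ≃o Y.B0) {x : X.V}
    (hd : vdeg2 cX x) :
    CV cY hcY cX hcX hY φ.symm (CV cX hcX cY hcY hX φ x) = x :=
  CV_uniq cY hcY cX hcX φ.symm (deg2_CV cX hcX cY hcY hX φ hd)
    (CV_spec cY hcY cX hcX hY φ.symm (CV cX hcX cY hcY hX φ x))
    (back_spec cX hcX cY hcY hX φ hd)

/-- The reconstruction map. -/
noncomputable def F (cX : X.V → Fin 2) (hcX : ∀ ⦃x y⦄, X.E x y → cX x ≠ cX y)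
    (cY : Y.V → Fin 2) (hcY : ∀ ⦃x y⦄, Y.E x y → cY x ≠ cY y)
    (hX : X.NoIsolated) (φ : X.B0 ≃o Y.B0) (x : X.V) : Y.V :=
  if vdeg2 cX x then CV cX hcX cY hcY hX φ x
  else if vdeg2 cX (ep cX (theEdge cX hcX hX x) (1 - cX x)) then
    ep cY (φ (theEdge cX hcX hX x))
      (1 - cY (CV cX hcX cY hcY hX φ (ep cX (theEdge cX hcX hX x) (1 - cX x))))
  else ep cY (φ (theEdge cX hcX hX x)) (cX x)

lemma F_vmem (cX : X.V → Fin 2) (hcX : ∀ ⦃x y⦄, X.E x y → cX x ≠ cX y)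
    (cY : Y.V → Fin 2) (hcY : ∀ ⦃x y⦄, Y.E x y → cY x ≠ cY y)
    (hX : X.NoIsolated) (φ : X.B0 ≃o Y.B0) {x : X.V} {e : X.B0}
    (hme : MinP e) (hxe : vmem cX x e) :
    vmem cY (F cX hcX cY hcY hX φ x) (φ e) := by
  unfold F
  by_cases hd : vdeg2 cX x
  · rw [if_pos hd]
    exact CV_spec cX hcX cY hcY hX φ x e hme hxe
  · rw [if_neg hd]
    rw [← edge_uniq cX hcX hX hd hme hxe]
    by_cases hdb : vdeg2 cX (ep cX e (1 - cX x))
    · rw [if_pos hdb]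
      exact ep_vmem cY hcY (φ e) _
    · rw [if_neg hdb]
      exact ep_vmem cY hcY (φ e) _

lemma F_ne (cX : X.V → Fin 2) (hcX : ∀ ⦃x y⦄, X.E x y → cX x ≠ cX y)
    (cY : Y.V → Fin 2) (hcY : ∀ ⦃x y⦄, Y.E x y → cY x ≠ cY y)
    (hX : X.NoIsolated) (φ : X.B0 ≃o Y.B0) {x b : X.V} (h : X.E x b) :
    F cX hcX cY hcY hX φ x ≠ F cX hcX cY hcY hX φ b := by
  have hme : MinP (edg cX h) := minP_edg cX hcX h
  have hxe : vmem cX x (edg cX h) := (vmem_edg cX hcX h).mpr (Or.inl rfl)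
  have hbe : vmem cX b (edg cX h) := (vmem_edg cX hcX h).mpr (Or.inr rfl)
  have hxb : x ≠ b := fun hh => hcX h (by rw [hh])
  have hcxb : cX b = 1 - cX x := f2a _ _ (Ne.symm (hcX h))
  have hepx : ep cX (edg cX h) (cX x) = x := ep_uniq cX hcX hme hxe rfl
  have hepb : ep cX (edg cX h) (1 - cX x) = b := ep_uniq cX hcX hme hbe hcxb
  unfold F
  by_cases hdx : vdeg2 cX x <;> by_cases hdb : vdeg2 cX b
  · -- both deg ≥ 2
    rw [if_pos hdx, if_pos hdb]
    intro heq
    obtain ⟨e', hme', hxe', hne'⟩ := deg2_other cX hdx (edg cX h)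
    obtain ⟨e'', hme'', hbe'', hne''⟩ := deg2_other cX hdb (edg cX h)
    have hee : e' ≠ e'' := by
      intro hh
      subst hh
      exact hne' (two_vmem_eq cX hcX hme' hme hxe' hxe
        hbe'' hbe hxb)
    have hv1 : vmem cY (CV cX hcX cY hcY hX φ x) (φ e') :=
      CV_spec cX hcX cY hcY hX φ x e' hme' hxe'
    have hv2 : vmem cY (CV cX hcX cY hcY hX φ x) (φ e'') := by
      rw [heq]
      exact CV_spec cX hcX cY hcY hX φ b e'' hme'' hbe''
    have hadjY : AdjP (φ e') (φ e'') :=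
      adj_of_share cY hcY ((minP_map φ).mp hme') ((minP_map φ).mp hme'')
        (fun hh => hee (φ.injective hh)) hv1 hv2
    have hadjX : AdjP e' e'' := (adjP_map φ).mpr hadjY
    obtain ⟨w, hw1, hw2⟩ := share_of_adj cX hcX hme' hme'' hadjX
    by_cases hwx : w = x
    · subst hwx
      exact hne'' (two_vmem_eq cX hcX hme'' hme hw2 hxe hbe'' hbe hxb)
    by_cases hwb : w = b
    · subst hwb
      exact hne' (two_vmem_eq cX hcX hme' hme hxe' hxe hw1 hbe hxb)
    have hE1 : X.E x w := vmem_E cX hcX hme' hxe' hw1 (fun hh => hwx hh.symm)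
    have hE2 : X.E b w := vmem_E cX hcX hme'' hbe'' hw2 (fun hh => hwb hh.symm)
    exact triFree cX hcX hE1 (X.symm hE2) h
  · -- x deg ≥ 2, b pendant
    rw [if_pos hdx, if_neg hdb]
    rw [← edge_uniq cX hcX hX hdb hme hbe]
    have hb1 : (1 : Fin 2) - cX b = cX x := by rw [hcxb, f2d]
    have hepb' : ep cX (edg cX h) (1 - cX b) = x := by rw [hb1, hepx]
    rw [hepb', if_pos hdx]
    intro heq
    have hcol : cY (F cX hcX cY hcY hX φ x) = _ := rfl
    have := ep_color cY hcY (φ (edg cX h))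
      (1 - cY (CV cX hcX cY hcY hX φ x))
    rw [← heq] at this
    exact f2c _ this
  · -- x pendant, b deg ≥ 2
    rw [if_neg hdx, if_pos hdb]
    rw [← edge_uniq cX hcX hX hdx hme hxe, hepb, if_pos hdb]
    intro heq
    have := ep_color cY hcY (φ (edg cX h))
      (1 - cY (CV cX hcX cY hcY hX φ b))
    rw [heq] at this
    exact f2c _ this
  · -- both pendant
    rw [if_neg hdx, if_neg hdb]
    rw [← edge_uniq cX hcX hX hdx hme hxe, ← edge_uniq cX hcX hX hdb hme hbe]
    have hb1 : (1 : Fin 2) - cX b = cX x := by rw [hcxb, f2d]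
    have hepb' : ep cX (edg cX h) (1 - cX b) = x := by rw [hb1, hepx]
    rw [hepb, hepb', if_neg hdb, if_neg hdx]
    intro heq
    have h1 := ep_color cY hcY (φ (edg cX h)) (cX x)
    have h2 := ep_color cY hcY (φ (edg cX h)) (cX b)
    rw [heq, h2] at h1
    exact hcX h h1.symm

lemma F_hom (cX : X.V → Fin 2) (hcX : ∀ ⦃x y⦄, X.E x y → cX x ≠ cX y)
    (cY : Y.V → Fin 2) (hcY : ∀ ⦃x y⦄, Y.E x y → cY x ≠ cY y)
    (hX : X.NoIsolated) (φ : X.B0 ≃o Y.B0) {x b : X.V} (h : X.E x b) :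
    Y.E (F cX hcX cY hcY hX φ x) (F cX hcX cY hcY hX φ b) := by
  have hme : MinP (edg cX h) := minP_edg cX hcX h
  have hxe : vmem cX x (edg cX h) := (vmem_edg cX hcX h).mpr (Or.inl rfl)
  have hbe : vmem cX b (edg cX h) := (vmem_edg cX hcX h).mpr (Or.inr rfl)
  exact vmem_E cY hcY ((minP_map φ).mp hme)
    (F_vmem cX hcX cY hcY hX φ hme hxe)
    (F_vmem cX hcX cY hcY hX φ hme hbe)
    (F_ne cX hcX cY hcY hX φ h)

lemma F_leftInv (cX : X.V → Fin 2) (hcX : ∀ ⦃x y⦄, X.E x y → cX x ≠ cX y)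
    (cY : Y.V → Fin 2) (hcY : ∀ ⦃x y⦄, Y.E x y → cY x ≠ cY y)
    (hX : X.NoIsolated) (hY : Y.NoIsolated) (φ : X.B0 ≃o Y.B0) (x : X.V) :
    F cY hcY cX hcX hY φ.symm (F cX hcX cY hcY hX φ x) = x := by
  by_cases hd : vdeg2 cX x
  · have h1 : F cX hcX cY hcY hX φ x = CV cX hcX cY hcY hX φ x := by
      unfold F; rw [if_pos hd]
    rw [h1]
    have hdy : vdeg2 cY (CV cX hcX cY hcY hX φ x) := deg2_CV cX hcX cY hcY hX φ hd
    conv_lhs => rw [F]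
    rw [if_pos hdy]
    exact LI1 cX hcX cY hcY hX hY φ hd
  · obtain ⟨hme, hxe⟩ := theEdge_spec cX hcX hX x
    set e := theEdge cX hcX hX x with hedef
    set b := ep cX e (1 - cX x) with hbdef
    have hbe : vmem cX b e := by rw [hbdef]; exact ep_vmem cX hcX e _
    have hcb : cX b = 1 - cX x := by rw [hbdef]; exact ep_color cX hcX e _
    have hxb : x ≠ b := by
      intro hh
      rw [← hh] at hcb
      exact f2c _ hcb
    have hepx : ep cX e (cX x) = x := ep_uniq cX hcX hme hxe rfl
    have hm0 : MinP (φ e) := (minP_map φ).mp hme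
    have hends : ∀ w, vmem cX w e → w = x ∨ w = b := by
      intro w hw
      have h01 : ep cX e 0 = x ∨ ep cX e 0 = b := by
        rcases f2e (cX x) with hcx | hcx
        · left; rw [← hepx, hcx]
        · right; rw [hbdef, hcx, show (1 - 1 : Fin 2) = 0 from rfl]
      have h11 : ep cX e 1 = x ∨ ep cX e 1 = b := by
        rcases f2e (cX x) with hcx | hcx
        · right; rw [hbdef, hcx, show (1 - 0 : Fin 2) = 1 from rfl]
        · left; rw [← hepx, hcx]
      rcases vmem_cases cX hcX hme hw with h0 | h0
      · rw [h0]; exact h01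
      · rw [h0]; exact h11
    have key : ∀ m : Y.B0, MinP m → m ≠ φ e →
        (∃ z, vmem cY z m ∧ vmem cY z (φ e)) →
        ∃ w, (w = x ∨ w = b) ∧ vmem cX w (φ.symm m) ∧ φ.symm m ≠ e := by
      intro m hm hne hz
      obtain ⟨z, hzm, hze⟩ := hz
      have hadj : AdjP (φ.symm m) e := by
        rw [adjP_map φ, φ.apply_symm_apply]
        exact adj_of_share cY hcY hm hm0 hne hzm hze
      obtain ⟨w, hw1, hw2⟩ := share_of_adj cX hcX ((minP_map φ.symm).mp hm) hme hadj
      refine ⟨w, hends w hw2, hw1, ?_⟩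
      intro hh
      apply hne
      rw [← hh, φ.apply_symm_apply]
    by_cases hdb : vdeg2 cX b
    · -- pendant x, deg2 b
      have hFx : F cX hcX cY hcY hX φ x =
          ep cY (φ e) (1 - cY (CV cX hcX cY hcY hX φ b)) := by
        unfold F
        rw [if_neg hd, ← hedef, ← hbdef, if_pos hdb]
      rw [hFx]
      set y' := CV cX hcX cY hcY hX φ b with hy'def
      set y := ep cY (φ e) (1 - cY y') with hydef
      have hym0 : vmem cY y (φ e) := by rw [hydef]; exact ep_vmem cY hcY (φ e) _
      have hcy : cY y = 1 - cY y' := by rw [hydef]; exact ep_color cY hcY (φ e) _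
      have hy'm0 : vmem cY y' (φ e) := by
        rw [hy'def]
        exact CV_spec cX hcX cY hcY hX φ b e hme hbe
      have hyy' : y ≠ y' := by
        intro hh
        rw [hh] at hcy
        exact f2c _ hcy
      have Hstar : ∀ m : Y.B0, MinP m → vmem cY y m → m = φ e := by
        intro m hm hym
        by_contra hne
        obtain ⟨w, hwxb, hws, hwne⟩ := key m hm hne ⟨y, hym, hym0⟩
        rcases hwxb with rfl | rfl
        · exact hd ⟨φ.symm m, e, (minP_map φ.symm).mp hm, hme, hwne, hws, hxe⟩
        · have h5 : vmem cY y' (φ (φ.symm m)) :=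
            CV_spec cX hcX cY hcY hX φ _ (φ.symm m) ((minP_map φ.symm).mp hm) hws
          rw [φ.apply_symm_apply] at h5
          exact hne (two_vmem_eq cY hcY hm hm0 hym hym0 h5 hy'm0 hyy')
      have hdy : ¬ vdeg2 cY y := by
        rintro ⟨m1, m2, hm1, hm2, hne12, hy1, hy2⟩
        exact hne12 ((Hstar m1 hm1 hy1).trans (Hstar m2 hm2 hy2).symm)
      conv_lhs => rw [F]
      rw [if_neg hdy]
      have hth : φ e = theEdge cY hcY hY y := edge_uniq cY hcY hY hdy hm0 hym0
      rw [← hth]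
      have hb' : ep cY (φ e) (1 - cY y) = y' := by
        apply ep_uniq cY hcY hm0 hy'm0
        rw [hcy, f2d]
      rw [hb']
      have hdy' : vdeg2 cY y' := by
        rw [hy'def]
        exact deg2_CV cX hcX cY hcY hX φ hdb
      rw [if_pos hdy']
      rw [φ.symm_apply_apply]
      have hLI : CV cY hcY cX hcX hY φ.symm y' = b := by
        rw [hy'def]
        exact LI1 cX hcX cY hcY hX hY φ hdb
      rw [hLI, hcb, f2d]
      exact hepx
    · -- pendant x, pendant b
      have hFx : F cX hcX cY hcY hX φ x = ep cY (φ e) (cX x) := by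
        unfold F
        rw [if_neg hd, ← hedef, ← hbdef, if_neg hdb]
      rw [hFx]
      set y := ep cY (φ e) (cX x) with hydef
      have hym0 : vmem cY y (φ e) := by rw [hydef]; exact ep_vmem cY hcY (φ e) _
      have hcy : cY y = cX x := by rw [hydef]; exact ep_color cY hcY (φ e) _
      have key2 : ∀ z, vmem cY z (φ e) → ∀ m : Y.B0, MinP m → vmem cY z m → m = φ e := by
        intro z hz m hm hzm
        by_contra hne
        obtain ⟨w, hwxb, hws, hwne⟩ := key m hm hne ⟨z, hzm, hz⟩
        rcases hwxb with rfl | rfl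
        · exact hd ⟨φ.symm m, e, (minP_map φ.symm).mp hm, hme, hwne, hws, hxe⟩
        · exact hdb ⟨φ.symm m, e, (minP_map φ.symm).mp hm, hme, hwne, hws, hbe⟩
      have hdy : ¬ vdeg2 cY y := by
        rintro ⟨m1, m2, hm1, hm2, hne12, hy1, hy2⟩
        exact hne12 ((key2 y hym0 m1 hm1 hy1).trans (key2 y hym0 m2 hm2 hy2).symm)
      conv_lhs => rw [F]
      rw [if_neg hdy]
      have hth : φ e = theEdge cY hcY hY y := edge_uniq cY hcY hY hdy hm0 hym0
      rw [← hth]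
      have hdb' : ¬ vdeg2 cY (ep cY (φ e) (1 - cY y)) := by
        rintro ⟨m1, m2, hm1, hm2, hne12, hy1, hy2⟩
        have hb'm : vmem cY (ep cY (φ e) (1 - cY y)) (φ e) := ep_vmem cY hcY (φ e) _
        exact hne12 ((key2 _ hb'm m1 hm1 hy1).trans (key2 _ hb'm m2 hm2 hy2).symm)
      rw [if_neg hdb']
      rw [φ.symm_apply_apply, hcy]
      exact hepx

end TwoGraphs
end B0R

/-- for bipartite graphs `X`, `Y` without isolated vertices, if the posets
`B₀(X)` and `B₀(Y)` are isomorphic then `X ≅ Y`. -/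
theorem B0_poset_iso_implies_graph_iso (X Y : SymmGraph)
    (hXbip : X.Bipartite) (hYbip : Y.Bipartite)
    (hX : X.NoIsolated) (hY : Y.NoIsolated)
    (h : Nonempty (X.B0 ≃o Y.B0)) : Nonempty (X.Iso Y) := by
  obtain ⟨φ⟩ := h
  obtain ⟨cX, hcX⟩ := hXbip
  obtain ⟨cY, hcY⟩ := hYbip
  refine ⟨⟨⟨B0R.F cX hcX cY hcY hX φ, B0R.F cY hcY cX hcX hY φ.symm, ?_, ?_⟩, ?_⟩⟩
  · exact fun x => B0R.F_leftInv cX hcX cY hcY hX hY φ x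
  · intro y
    have := B0R.F_leftInv cY hcY cX hcX hY hX φ.symm y
    rwa [OrderIso.symm_symm] at this
  · intro x y
    constructor
    · exact fun hE => B0R.F_hom cX hcX cY hcY hX φ hE
    · intro hE
      have := B0R.F_hom cY hcY cX hcX hY φ.symm hE
      simp only [Equiv.coe_fn_mk] at hE this
      rwa [B0R.F_leftInv cX hcX cY hcY hX hY φ x,
        B0R.F_leftInv cX hcX cY hcY hX hY φ y] at this
end
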